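/- arXiv:1206.4882 — 11 statements merged into one kernel-verified Lean document; each statement's English description precedes it below -/
import Mathlib

section
/- Let D be a triangulated category with a recollement by triangulated categories Y and X (with functors i^*, i_*, i^!, j_!, j^*, j_* satisfying the usual recollement axioms). Given torsion pairs (X', X'') in X and (Y', Y'') in Y, the pair (D', D'') defined by D' = {Z ∈ D : j^*Z ∈ X', i^*Z ∈ Y'} and D'' = {Z ∈ D : j^*Z ∈ X'', i^!Z ∈ Y''} is a torsion pair in D. -/
open CategoryTheory Limits Pretriangulated

namespace Glueing

variable (D : Type*) [Category D] [HasZeroObject D] [Preadditive D] [HasShift D ℤ]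
  [∀ n : ℤ, (shiftFunctor D n).Additive] [Pretriangulated D]

/-- A torsion pair in a triangulated category: a pair of strict (iso-closed) full
subcategories, closed under direct summands, with no morphisms from the first to the
second, such that every object is an extension of an object of the second class by an
object of the first class. -/
structure IsTorsionPair (P Q : D → Prop) : Prop where
  isoClosed_left : ∀ {A B : D}, (A ≅ B) → P A → P B
  isoClosed_right : ∀ {A B : D}, (A ≅ B) → Q A → Q B
  summands_left : ∀ {A B : D} (i : A ⟶ B) (r : B ⟶ A), i ≫ r = 𝟙 A → P B → P A
  summands_right : ∀ {A B : D} (i : A ⟶ B) (r : B ⟶ A), i ≫ r = 𝟙 A → Q B → Q A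
  orthogonal : ∀ {A B : D}, P A → Q B → ∀ f : A ⟶ B, f = 0
  exists_triangle : ∀ Z : D, ∃ (A B : D) (f : A ⟶ Z) (g : Z ⟶ B) (h : B ⟶ A⟦(1 : ℤ)⟧),
    P A ∧ Q B ∧ Triangle.mk f g h ∈ distinguishedTriangles

/-- A t-structure `(D^{≤0}, D^{≥0})` on a triangulated category, encoded as the
requirement that `(D^{≤0}, D^{≥1})` is a torsion pair with `D^{≤0}[1] ⊆ D^{≤0}`.
Here `Le` is `D^{≤0}` and `Ge` is `D^{≥0}`; the class `D^{≥1} = D^{≥0}[-1]` consists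
of objects `B` with `Ge (B⟦1⟧)`. -/
structure IsTStructure (Le Ge : D → Prop) : Prop where
  isoClosed_le : ∀ {A B : D}, (A ≅ B) → Le A → Le B
  isoClosed_ge : ∀ {A B : D}, (A ≅ B) → Ge A → Ge B
  summands_le : ∀ {A B : D} (i : A ⟶ B) (r : B ⟶ A), i ≫ r = 𝟙 A → Le B → Le A
  summands_ge : ∀ {A B : D} (i : A ⟶ B) (r : B ⟶ A), i ≫ r = 𝟙 A → Ge B → Ge A
  shift_le : ∀ A : D, Le A → Le (A⟦(1 : ℤ)⟧)
  shift_ge : ∀ A : D, Ge A → Ge (A⟦(-1 : ℤ)⟧)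
  orthogonal : ∀ {A B : D}, Le A → Ge (B⟦(1 : ℤ)⟧) → ∀ f : A ⟶ B, f = 0
  exists_triangle : ∀ Z : D, ∃ (A B : D) (f : A ⟶ Z) (g : Z ⟶ B) (h : B ⟶ A⟦(1 : ℤ)⟧),
    Le A ∧ Ge (B⟦(1 : ℤ)⟧) ∧ Triangle.mk f g h ∈ distinguishedTriangles

/-- A co-t-structure `(D_{≥0}, D_{≤0})` on a triangulated category; `Ge` is `D_{≥0}`
and `Le` is `D_{≤0}`. The class `D_{≤-1} = D_{≤0}[1]` consists of objects `B` with
`Le (B⟦-1⟧)`. -/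
structure IsCoTStructure (Ge Le : D → Prop) : Prop where
  isoClosed_ge : ∀ {A B : D}, (A ≅ B) → Ge A → Ge B
  isoClosed_le : ∀ {A B : D}, (A ≅ B) → Le A → Le B
  summands_ge : ∀ {A B : D} (i : A ⟶ B) (r : B ⟶ A), i ≫ r = 𝟙 A → Ge B → Ge A
  summands_le : ∀ {A B : D} (i : A ⟶ B) (r : B ⟶ A), i ≫ r = 𝟙 A → Le B → Le A
  shift_ge : ∀ A : D, Ge A → Ge (A⟦(-1 : ℤ)⟧)
  shift_le : ∀ A : D, Le A → Le (A⟦(1 : ℤ)⟧)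
  orthogonal : ∀ {A B : D}, Ge A → Le (B⟦(-1 : ℤ)⟧) → ∀ f : A ⟶ B, f = 0
  exists_triangle : ∀ Z : D, ∃ (A B : D) (f : A ⟶ Z) (g : Z ⟶ B) (h : B ⟶ A⟦(1 : ℤ)⟧),
    Ge A ∧ Le (B⟦(-1 : ℤ)⟧) ∧ Triangle.mk f g h ∈ distinguishedTriangles

variable (Y X : Type*) [Category Y] [HasZeroObject Y] [Preadditive Y] [HasShift Y ℤ]
  [∀ n : ℤ, (shiftFunctor Y n).Additive] [Pretriangulated Y]
  [Category X] [HasZeroObject X] [Preadditive X] [HasShift X ℤ]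
  [∀ n : ℤ, (shiftFunctor X n).Additive] [Pretriangulated X]

/-- A recollement of a triangulated category `D` by triangulated categories `Y` and `X`:
six triangle functors `i^* ⊣ i_* ⊣ i^!` and `j_! ⊣ j^* ⊣ j_*` with `i_*, j_!, j_*`
fully faithful, `j^* ∘ i_* = 0`, and the two canonical glueing triangles. -/
structure Recollement where
  iStar : D ⥤ Y
  iLower : Y ⥤ D
  iShriek : D ⥤ Y
  jLower : X ⥤ D
  jStar : D ⥤ X
  jUpper : X ⥤ D
  commShift_iStar : iStar.CommShift ℤ
  commShift_iLower : iLower.CommShift ℤ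
  commShift_iShriek : iShriek.CommShift ℤ
  commShift_jLower : jLower.CommShift ℤ
  commShift_jStar : jStar.CommShift ℤ
  commShift_jUpper : jUpper.CommShift ℤ
  isTriangulated_iStar : letI := commShift_iStar; iStar.IsTriangulated
  isTriangulated_iLower : letI := commShift_iLower; iLower.IsTriangulated
  isTriangulated_iShriek : letI := commShift_iShriek; iShriek.IsTriangulated
  isTriangulated_jLower : letI := commShift_jLower; jLower.IsTriangulated
  isTriangulated_jStar : letI := commShift_jStar; jStar.IsTriangulated
  isTriangulated_jUpper : letI := commShift_jUpper; jUpper.IsTriangulated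
  adj_i₁ : iStar ⊣ iLower
  adj_i₂ : iLower ⊣ iShriek
  adj_j₁ : jLower ⊣ jStar
  adj_j₂ : jStar ⊣ jUpper
  iLower_full : iLower.Full
  iLower_faithful : iLower.Faithful
  jLower_full : jLower.Full
  jLower_faithful : jLower.Faithful
  jUpper_full : jUpper.Full
  jUpper_faithful : jUpper.Faithful
  jStar_iLower_zero : ∀ A : Y, IsZero (jStar.obj (iLower.obj A))
  triangle₁ : ∀ Z : D, ∃ δ : jUpper.obj (jStar.obj Z) ⟶ (iLower.obj (iShriek.obj Z))⟦(1 : ℤ)⟧,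
    Triangle.mk (adj_i₂.counit.app Z) (adj_j₂.unit.app Z) δ ∈ distinguishedTriangles
  triangle₂ : ∀ Z : D, ∃ δ : iLower.obj (iStar.obj Z) ⟶ (jLower.obj (jStar.obj Z))⟦(1 : ℤ)⟧,
    Triangle.mk (adj_j₁.counit.app Z) (adj_i₁.unit.app Z) δ ∈ distinguishedTriangles

/-- An object `M` generates a triangulated category if the only class of objects which
is closed under isomorphisms, shifts, extensions and direct summands and contains `M`
is the class of all objects. -/
def Generates (C : Type*) [Category C] [HasZeroObject C] [Preadditive C] [HasShift C ℤ]
    [∀ n : ℤ, (shiftFunctor C n).Additive] [Pretriangulated C] (M : C) : Prop :=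
  ∀ P : C → Prop,
    (∀ {A B : C}, (A ≅ B) → P A → P B) →
    (∀ (n : ℤ) (A : C), P A → P (A⟦n⟧)) →
    (∀ T : Triangle C, T ∈ distinguishedTriangles → P T.obj₁ → P T.obj₃ → P T.obj₂) →
    (∀ {A B : C} (i : A ⟶ B) (r : B ⟶ A), i ≫ r = 𝟙 A → P B → P A) →
    P M → ∀ Z : C, P Z

/-- A silting object: no positive self-extensions, and it generates the category. -/
def IsSilting (C : Type*) [Category C] [HasZeroObject C] [Preadditive C] [HasShift C ℤ]
    [∀ n : ℤ, (shiftFunctor C n).Additive] [Pretriangulated C] (M : C) : Prop :=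
  (∀ i : ℤ, 0 < i → ∀ f : M ⟶ M⟦i⟧, f = 0) ∧ Generates C M

end Glueing

namespace GluedAux

open CategoryTheory Limits Pretriangulated

variable {C : Type*} [Category C] [HasZeroObject C] [Preadditive C] [HasShift C ℤ]
  [∀ n : ℤ, (shiftFunctor C n).Additive] [Pretriangulated C]

/-- Uniqueness of cones: from two distinguished triangles and compatible isomorphisms on
the first two objects, get an isomorphism on the third objects. -/
lemma iso₃_of_distTriang (T₁ T₂ : Triangle C) (h₁ : T₁ ∈ distinguishedTriangles)
    (h₂ : T₂ ∈ distinguishedTriangles) (a : T₁.obj₁ ≅ T₂.obj₁) (b : T₁.obj₂ ≅ T₂.obj₂)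
    (comm : T₁.mor₁ ≫ b.hom = a.hom ≫ T₂.mor₁) : Nonempty (T₁.obj₃ ≅ T₂.obj₃) :=
  ⟨Triangle.π₃.mapIso (Pretriangulated.isoTriangleOfIso₁₂ T₁ T₂ h₁ h₂ a b comm)⟩

/-- Uniqueness of cocones: from two distinguished triangles and compatible isomorphisms on
the last two objects, get an isomorphism on the first objects. -/
lemma iso₁_of_distTriang (T₁ T₂ : Triangle C) (h₁ : T₁ ∈ distinguishedTriangles)
    (h₂ : T₂ ∈ distinguishedTriangles) (b : T₁.obj₂ ≅ T₂.obj₂) (c : T₁.obj₃ ≅ T₂.obj₃)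
    (comm : T₁.mor₂ ≫ c.hom = b.hom ≫ T₂.mor₂) : Nonempty (T₁.obj₁ ≅ T₂.obj₁) := by
  have e := Pretriangulated.isoTriangleOfIso₁₂ T₁.rotate T₂.rotate
    (rot_of_distTriang _ h₁) (rot_of_distTriang _ h₂) b c comm
  exact ⟨(shiftFunctor C (1 : ℤ)).preimageIso (Triangle.π₃.mapIso e)⟩

end GluedAux


open Glueing CategoryTheory Limits Pretriangulated in
/-- Glueing of torsion pairs along a recollement: given torsion pairs `(X', X'')` in `X`
and `(Y', Y'')` in `Y`, the pair `D' = {Z : j^*Z ∈ X', i^*Z ∈ Y'}`,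
`D'' = {Z : j^*Z ∈ X'', i^!Z ∈ Y''}` is a torsion pair in `D`. -/
theorem glued_torsionPair
    {D Y X : Type*} [Category D] [HasZeroObject D] [Preadditive D] [HasShift D ℤ]
    [∀ n : ℤ, (shiftFunctor D n).Additive] [Pretriangulated D]
    [Category Y] [HasZeroObject Y] [Preadditive Y] [HasShift Y ℤ]
    [∀ n : ℤ, (shiftFunctor Y n).Additive] [Pretriangulated Y]
    [Category X] [HasZeroObject X] [Preadditive X] [HasShift X ℤ]
    [∀ n : ℤ, (shiftFunctor X n).Additive] [Pretriangulated X]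
    (R : Recollement D Y X)
    {PX QX : X → Prop} {PY QY : Y → Prop}
    (hX : IsTorsionPair X PX QX) (hY : IsTorsionPair Y PY QY) :
    IsTorsionPair D
      (fun Z => PX (R.jStar.obj Z) ∧ PY (R.iStar.obj Z))
      (fun Z => QX (R.jStar.obj Z) ∧ QY (R.iShriek.obj Z)) := by
  letI := R.commShift_iStar; letI := R.commShift_iLower; letI := R.commShift_iShriek
  letI := R.commShift_jLower; letI := R.commShift_jStar; letI := R.commShift_jUpper
  letI := R.isTriangulated_iStar; letI := R.isTriangulated_iLower
  letI := R.isTriangulated_iShriek; letI := R.isTriangulated_jLower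
  letI := R.isTriangulated_jStar; letI := R.isTriangulated_jUpper
  letI := R.iLower_full; letI := R.iLower_faithful
  letI := R.jLower_full; letI := R.jLower_faithful
  letI := R.jUpper_full; letI := R.jUpper_faithful
  -- `i^! ∘ j_* = 0`
  have hzero' : ∀ x : X, IsZero (R.iShriek.obj (R.jUpper.obj x)) := by
    intro x
    rw [IsZero.iff_id_eq_zero]
    apply (R.adj_i₂.homEquiv (R.iShriek.obj (R.jUpper.obj x)) (R.jUpper.obj x)).symm.injective
    apply (R.adj_j₂.homEquiv (R.iLower.obj (R.iShriek.obj (R.jUpper.obj x))) x).symm.injective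
    apply (R.jStar_iLower_zero (R.iShriek.obj (R.jUpper.obj x))).eq_of_src
  refine ⟨?_, ?_, ?_, ?_, ?_, ?_⟩
  · rintro A B e ⟨h1, h2⟩
    exact ⟨hX.isoClosed_left (R.jStar.mapIso e) h1, hY.isoClosed_left (R.iStar.mapIso e) h2⟩
  · rintro A B e ⟨h1, h2⟩
    exact ⟨hX.isoClosed_right (R.jStar.mapIso e) h1, hY.isoClosed_right (R.iShriek.mapIso e) h2⟩
  · rintro A B i r hir ⟨h1, h2⟩
    exact ⟨hX.summands_left (R.jStar.map i) (R.jStar.map r)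
        (by rw [← CategoryTheory.Functor.map_comp, hir, CategoryTheory.Functor.map_id]) h1,
      hY.summands_left (R.iStar.map i) (R.iStar.map r)
        (by rw [← CategoryTheory.Functor.map_comp, hir, CategoryTheory.Functor.map_id]) h2⟩
  · rintro A B i r hir ⟨h1, h2⟩
    exact ⟨hX.summands_right (R.jStar.map i) (R.jStar.map r)
        (by rw [← CategoryTheory.Functor.map_comp, hir, CategoryTheory.Functor.map_id]) h1,
      hY.summands_right (R.iShriek.map i) (R.iShriek.map r)
        (by rw [← CategoryTheory.Functor.map_comp, hir, CategoryTheory.Functor.map_id]) h2⟩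
  · -- orthogonality
    rintro A B ⟨hA1, hA2⟩ ⟨hB1, hB2⟩ f
    obtain ⟨δ, hT⟩ := R.triangle₁ B
    have h1 : f ≫ R.adj_j₂.unit.app B = 0 := by
      apply (R.adj_j₂.homEquiv A (R.jStar.obj B)).symm.injective
      rw [hX.orthogonal hA1 hB1 ((R.adj_j₂.homEquiv A (R.jStar.obj B)).symm _),
        hX.orthogonal hA1 hB1 ((R.adj_j₂.homEquiv A (R.jStar.obj B)).symm _)]
    obtain ⟨g, hg⟩ := Triangle.coyoneda_exact₂ _ hT f h1
    have h2 : g = 0 := by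
      apply (R.adj_i₁.homEquiv A (R.iShriek.obj B)).symm.injective
      exact (hY.orthogonal hA2 hB2 _).trans (hY.orthogonal hA2 hB2 _).symm
    rw [hg, h2]
    exact zero_comp
  · -- existence of torsion triangles
    intro Z
    obtain ⟨x₁, x₂, a, b, d, hx₁, hx₂, hTX⟩ := hX.exists_triangle (R.jStar.obj Z)
    set ψ : Z ⟶ R.jUpper.obj x₂ := (R.adj_j₂.homEquiv Z x₂) b with hψ
    obtain ⟨W, w, δ₁, hTW⟩ := Pretriangulated.distinguished_cocone_triangle₁ ψ
    obtain ⟨y₁, y₂, a₂, b₂, d₂, hy₁, hy₂, hTY⟩ := hY.exists_triangle (R.iStar.obj W)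
    set φ : W ⟶ R.iLower.obj y₂ := (R.adj_i₁.homEquiv W y₂) b₂ with hφ
    obtain ⟨A, u, δ₂, hTA⟩ := Pretriangulated.distinguished_cocone_triangle₁ φ
    obtain ⟨B, g, h, hTB⟩ := Pretriangulated.distinguished_cocone_triangle (u ≫ w)
    -- the images of the three triangles in `D` under the functors
    have hFA := R.jStar.map_distinguished _ hTA
    have hFW := R.jStar.map_distinguished _ hTW
    have hFB := R.jStar.map_distinguished _ hTB
    have hGA := R.iStar.map_distinguished _ hTA
    have hHW := R.iShriek.map_distinguished _ hTW
    have hHA := R.iShriek.map_distinguished _ hTA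
    have hHB := R.iShriek.map_distinguished _ hTB
    -- `jStar.map u` is an isomorphism
    have hzu : IsIso (R.jStar.map u) := by
      refine (Triangle.isZero₃_iff_isIso₁ _ hFA).mp ?_
      exact R.jStar_iLower_zero y₂
    -- `iShriek.map w` is an isomorphism
    have hzw : IsIso (R.iShriek.map w) := by
      refine (Triangle.isZero₃_iff_isIso₁ _ hHW).mp ?_
      exact hzero' x₂
    -- counit components are isomorphisms
    have hcj : IsIso (R.adj_j₂.counit.app x₂) := inferInstance
    have hci : IsIso (R.adj_i₁.counit.app y₂) := inferInstance
    have keyj : R.jStar.map ψ ≫ R.adj_j₂.counit.app x₂ = b := by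
      have h' := R.adj_j₂.homEquiv_counit (X := Z) (Y := x₂) (g := ψ)
      rw [← h', hψ, Equiv.symm_apply_apply]
    have keyi : R.iStar.map φ ≫ R.adj_i₁.counit.app y₂ = b₂ := by
      have h' := R.adj_i₁.homEquiv_counit (X := W) (Y := y₂) (g := φ)
      rw [← h', hφ, Equiv.symm_apply_apply]
    refine ⟨A, B, u ≫ w, g, h, ⟨?_, ?_⟩, ⟨?_, ?_⟩, hTB⟩
    · -- PX (jStar A)
      obtain ⟨e⟩ := GluedAux.iso₁_of_distTriang (Triangle.mk a b d)
        (R.jStar.mapTriangle.obj (Triangle.mk w ψ δ₁)) hTX hFW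
        (Iso.refl (R.jStar.obj Z)) (asIso (R.adj_j₂.counit.app x₂)).symm
        (by show b ≫ inv (R.adj_j₂.counit.app x₂) = 𝟙 (R.jStar.obj Z) ≫ R.jStar.map ψ; rw [Category.id_comp, ← keyj, Category.assoc, IsIso.hom_inv_id, Category.comp_id])
      exact hX.isoClosed_left (e ≪≫ (asIso (R.jStar.map u)).symm) hx₁
    · -- PY (iStar A)
      obtain ⟨e⟩ := GluedAux.iso₁_of_distTriang (Triangle.mk a₂ b₂ d₂)
        (R.iStar.mapTriangle.obj (Triangle.mk u φ δ₂)) hTY hGA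
        (Iso.refl (R.iStar.obj W)) (asIso (R.adj_i₁.counit.app y₂)).symm
        (by show b₂ ≫ inv (R.adj_i₁.counit.app y₂) = 𝟙 (R.iStar.obj W) ≫ R.iStar.map φ; rw [Category.id_comp, ← keyi, Category.assoc, IsIso.hom_inv_id, Category.comp_id])
      exact hY.isoClosed_left e hy₁
    · -- QX (jStar B)
      obtain ⟨e⟩ := GluedAux.iso₃_of_distTriang
        (R.jStar.mapTriangle.obj (Triangle.mk (u ≫ w) g h))
        (R.jStar.mapTriangle.obj (Triangle.mk w ψ δ₁)) hFB hFW
        (@asIso _ _ _ _ (R.jStar.map u) hzu) (Iso.refl (R.jStar.obj Z))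
        (by show R.jStar.map (u ≫ w) ≫ 𝟙 (R.jStar.obj Z) = R.jStar.map u ≫ R.jStar.map w; rw [Category.comp_id, CategoryTheory.Functor.map_comp])
      exact hX.isoClosed_right ((asIso (R.adj_j₂.counit.app x₂)).symm ≪≫ e.symm) hx₂
    · -- QY (iShriek B)
      obtain ⟨e⟩ := GluedAux.iso₃_of_distTriang
        (R.iShriek.mapTriangle.obj (Triangle.mk (u ≫ w) g h))
        (R.iShriek.mapTriangle.obj (Triangle.mk u φ δ₂)) hHB hHA
        (Iso.refl (R.iShriek.obj A)) (asIso (R.iShriek.map w)).symm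
        (by show R.iShriek.map (u ≫ w) ≫ inv (R.iShriek.map w) = 𝟙 (R.iShriek.obj A) ≫ R.iShriek.map u; rw [Category.id_comp, CategoryTheory.Functor.map_comp, Category.assoc, IsIso.hom_inv_id, Category.comp_id])
      exact hY.isoClosed_right ((asIso (R.adj_i₂.unit.app y₂)) ≪≫ e.symm) hy₂
end

section
/- Let D be a triangulated category with a recollement by Y and X. If (X^{≤0}, X^{≥0}) and (Y^{≤0}, Y^{≥0}) are t-structures in X and Y respectively, then the glued pair D^{≤0} = {Z ∈ D : j^*Z ∈ X^{≤0}, i^*Z ∈ Y^{≤0}} and D^{≥0} = {Z ∈ D : j^*Z ∈ X^{≥0}, i^!Z ∈ Y^{≥0}} is a t-structure in D. -/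
open CategoryTheory Limits Pretriangulated

section Helpers

open CategoryTheory Limits Pretriangulated

variable {C : Type*} [Category C] [HasZeroObject C] [Preadditive C] [HasShift C ℤ]
  [∀ n : ℤ, (shiftFunctor C n).Additive] [Pretriangulated C]

/-- Extend isomorphisms on the second and third objects of distinguished triangles to an
isomorphism on the first objects. -/
lemma glueing_exists_iso₁ (T₁ T₂ : Triangle C)
    (hT₁ : T₁ ∈ distinguishedTriangles) (hT₂ : T₂ ∈ distinguishedTriangles)
    (e₂ : T₁.obj₂ ≅ T₂.obj₂) (e₃ : T₁.obj₃ ≅ T₂.obj₃)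
    (comm : T₁.mor₂ ≫ e₃.hom = e₂.hom ≫ T₂.mor₂) :
    ∃ e₁ : T₁.obj₁ ≅ T₂.obj₁, T₁.mor₁ ≫ e₂.hom = e₁.hom ≫ T₂.mor₁ := by
  let Φ := isoTriangleOfIso₁₂ T₁.rotate T₂.rotate (rot_of_distTriang _ hT₁)
    (rot_of_distTriang _ hT₂) e₂ e₃ comm
  let e := (shiftFunctor C (1 : ℤ)).preimageIso (Triangle.π₃.mapIso Φ)
  refine ⟨e, (shiftFunctor C (1 : ℤ)).map_injective ?_⟩
  have hc := Φ.hom.comm₃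
  have h1 : Φ.hom.hom₁ = e₂.hom := by
    rfl
  dsimp [Triangle.rotate] at hc
  rw [h1] at hc
  erw [Preadditive.neg_comp, Preadditive.comp_neg, neg_inj] at hc
  have he : (shiftFunctor C (1 : ℤ)).map e.hom = Φ.hom.hom₃ := by
    exact (shiftFunctor C (1 : ℤ)).map_preimage _
  simp only [Functor.map_comp, he]
  exact hc

end Helpers

open Glueing CategoryTheory Limits Pretriangulated in
/-- Glueing of t-structures along a recollement (Beilinson–Bernstein–Deligne): given
t-structures on `X` and on `Y`, the pair `D^{≤0} = {Z : j^*Z ∈ X^{≤0}, i^*Z ∈ Y^{≤0}}`,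
`D^{≥0} = {Z : j^*Z ∈ X^{≥0}, i^!Z ∈ Y^{≥0}}` is a t-structure on `D`. -/
theorem glued_tStructure
    {D Y X : Type*} [Category D] [HasZeroObject D] [Preadditive D] [HasShift D ℤ]
    [∀ n : ℤ, (shiftFunctor D n).Additive] [Pretriangulated D]
    [Category Y] [HasZeroObject Y] [Preadditive Y] [HasShift Y ℤ]
    [∀ n : ℤ, (shiftFunctor Y n).Additive] [Pretriangulated Y]
    [Category X] [HasZeroObject X] [Preadditive X] [HasShift X ℤ]
    [∀ n : ℤ, (shiftFunctor X n).Additive] [Pretriangulated X]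
    (R : Recollement D Y X)
    {XLe XGe : X → Prop} {YLe YGe : Y → Prop}
    (hX : IsTStructure X XLe XGe) (hY : IsTStructure Y YLe YGe) :
    IsTStructure D
      (fun Z => XLe (R.jStar.obj Z) ∧ YLe (R.iStar.obj Z))
      (fun Z => XGe (R.jStar.obj Z) ∧ YGe (R.iShriek.obj Z)) := by
  letI := R.commShift_iStar
  letI := R.commShift_iLower
  letI := R.commShift_iShriek
  letI := R.commShift_jLower
  letI := R.commShift_jStar
  letI := R.commShift_jUpper
  haveI := R.isTriangulated_iStar
  haveI := R.isTriangulated_iLower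
  haveI := R.isTriangulated_iShriek
  haveI := R.isTriangulated_jLower
  haveI := R.isTriangulated_jStar
  haveI := R.isTriangulated_jUpper
  haveI := R.iLower_full
  haveI := R.iLower_faithful
  haveI := R.jLower_full
  haveI := R.jLower_faithful
  haveI := R.jUpper_full
  haveI := R.jUpper_faithful
  constructor
  · rintro A B e ⟨h1, h2⟩
    exact ⟨hX.isoClosed_le (R.jStar.mapIso e) h1, hY.isoClosed_le (R.iStar.mapIso e) h2⟩
  · rintro A B e ⟨h1, h2⟩
    exact ⟨hX.isoClosed_ge (R.jStar.mapIso e) h1, hY.isoClosed_ge (R.iShriek.mapIso e) h2⟩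
  · rintro A B i r hir ⟨h1, h2⟩
    refine ⟨hX.summands_le (R.jStar.map i) (R.jStar.map r) ?_ h1,
      hY.summands_le (R.iStar.map i) (R.iStar.map r) ?_ h2⟩ <;>
      rw [← Functor.map_comp, hir, CategoryTheory.Functor.map_id]
  · rintro A B i r hir ⟨h1, h2⟩
    refine ⟨hX.summands_ge (R.jStar.map i) (R.jStar.map r) ?_ h1,
      hY.summands_ge (R.iShriek.map i) (R.iShriek.map r) ?_ h2⟩ <;>
      rw [← Functor.map_comp, hir, CategoryTheory.Functor.map_id]
  · rintro A ⟨h1, h2⟩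
    exact ⟨hX.isoClosed_le ((R.jStar.commShiftIso (1 : ℤ)).app A).symm (hX.shift_le _ h1),
      hY.isoClosed_le ((R.iStar.commShiftIso (1 : ℤ)).app A).symm (hY.shift_le _ h2)⟩
  · rintro A ⟨h1, h2⟩
    exact ⟨hX.isoClosed_ge ((R.jStar.commShiftIso (-1 : ℤ)).app A).symm (hX.shift_ge _ h1),
      hY.isoClosed_ge ((R.iShriek.commShiftIso (-1 : ℤ)).app A).symm (hY.shift_ge _ h2)⟩
  · rintro A B ⟨hA1, hA2⟩ ⟨hB1, hB2⟩ f
    have hXB : XGe ((R.jStar.obj B)⟦(1 : ℤ)⟧) :=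
      hX.isoClosed_ge ((R.jStar.commShiftIso (1 : ℤ)).app B) hB1
    have hYB : YGe ((R.iShriek.obj B)⟦(1 : ℤ)⟧) :=
      hY.isoClosed_ge ((R.iShriek.commShiftIso (1 : ℤ)).app B) hB2
    obtain ⟨δ, hT⟩ := R.triangle₂ A
    have h1 : R.adj_j₁.counit.app A ≫ f = 0 := by
      have hz : R.jStar.map f = 0 := hX.orthogonal hA1 hXB _
      have := R.adj_j₁.counit.naturality f
      dsimp at this
      rw [← this, hz, Functor.map_zero, zero_comp]
    obtain ⟨g, hg⟩ := Triangle.yoneda_exact₂ _ hT f h1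
    have hg0 : (R.adj_i₂.homEquiv _ _) g = 0 := hY.orthogonal hA2 hYB _
    have hgz : g = 0 := by
      have h2 := (R.adj_i₂.homEquiv _ _).symm_apply_apply g
      rw [hg0, Adjunction.homEquiv_counit, Functor.map_zero, zero_comp] at h2
      exact h2.symm
    rw [hg, hgz, comp_zero]
    rfl
  · intro Z
    obtain ⟨X₁, X₂, xa, xb, xc, hX₁, hX₂, hTX⟩ := hX.exists_triangle (R.jStar.obj Z)
    set m := (R.adj_j₂.homEquiv Z X₂) xb with hm
    obtain ⟨Z'', p, δ₁, hT1⟩ := distinguished_cocone_triangle₁ m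
    have hcounit : R.jStar.map m ≫ R.adj_j₂.counit.app X₂ = xb := by
      have h1 := (R.adj_j₂.homEquiv Z X₂).symm_apply_apply xb
      rw [Adjunction.homEquiv_counit] at h1
      exact h1
    -- ψ : jStar Z'' ≅ X₁
    obtain ⟨ψ, hψ⟩ := glueing_exists_iso₁ (R.jStar.mapTriangle.obj (Triangle.mk p m δ₁))
      (Triangle.mk xa xb xc) (R.jStar.map_distinguished _ hT1) hTX
      (Iso.refl _) (@asIso _ _ _ _ (R.adj_j₂.counit.app X₂) (NatIso.isIso_app_of_isIso _ _)) (hcounit.trans (Category.id_comp xb).symm)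
    erw [Iso.refl_hom, Category.comp_id] at hψ
    change R.jStar.map p = ψ.hom ≫ xa at hψ
    -- truncate iStar Z''
    obtain ⟨Y₁, Y₂, ya, yb, yc, hY₁, hY₂, hTY⟩ := hY.exists_triangle (R.iStar.obj Z'')
    set n := (R.adj_i₁.homEquiv Z'' Y₂) yb with hn
    obtain ⟨A, q, δ₂, hT2⟩ := distinguished_cocone_triangle₁ n
    obtain ⟨B, u, δ₃, hT3⟩ := distinguished_cocone_triangle (q ≫ p)
    -- jStar q is an isomorphism
    have hzero₃ : IsZero ((R.jStar.mapTriangle.obj (Triangle.mk q n δ₂)).obj₃) :=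
      R.jStar_iLower_zero Y₂
    haveI : IsIso (R.jStar.map q) :=
      (Triangle.isZero₃_iff_isIso₁ _ (R.jStar.map_distinguished _ hT2)).1 hzero₃
    -- φ : iStar A ≅ Y₁
    have hcounit' : R.iStar.map n ≫ R.adj_i₁.counit.app Y₂ = yb := by
      have h1 := (R.adj_i₁.homEquiv Z'' Y₂).symm_apply_apply yb
      rw [Adjunction.homEquiv_counit] at h1
      exact h1
    obtain ⟨φ, hφ⟩ := glueing_exists_iso₁ (R.iStar.mapTriangle.obj (Triangle.mk q n δ₂))
      (Triangle.mk ya yb yc) (R.iStar.map_distinguished _ hT2) hTY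
      (Iso.refl _) (@asIso _ _ _ _ (R.adj_i₁.counit.app Y₂) (NatIso.isIso_app_of_isIso _ _)) (hcounit'.trans (Category.id_comp yb).symm)
    erw [Iso.refl_hom, Category.comp_id] at hφ
    change R.iStar.map q = φ.hom ≫ ya at hφ
    refine ⟨A, B, q ≫ p, u, δ₃, ⟨?_, ?_⟩, ⟨?_, ?_⟩, hT3⟩
    · -- XLe (jStar A)
      exact hX.isoClosed_le (asIso (R.jStar.map q) ≪≫ ψ).symm hX₁
    · -- YLe (iStar A)
      exact hY.isoClosed_le φ.symm hY₁
    · -- XGe (jStar (B⟦1⟧))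
      have Φ := isoTriangleOfIso₁₂ (R.jStar.mapTriangle.obj (Triangle.mk (q ≫ p) u δ₃))
        (Triangle.mk xa xb xc) (R.jStar.map_distinguished _ hT3) hTX
        (@asIso _ _ _ _ (R.jStar.map q) ‹IsIso (R.jStar.map q)› ≪≫ ψ) (Iso.refl _) (by
          change R.jStar.map (q ≫ p) ≫ 𝟙 _ = (R.jStar.map q ≫ ψ.hom) ≫ xa
          rw [Category.comp_id, Functor.map_comp]
          exact (congrArg (fun t => R.jStar.map q ≫ t) hψ).trans (Category.assoc _ _ _).symm)
      have hiso : R.jStar.obj B ≅ X₂ := Triangle.π₃.mapIso Φ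
      have s1 : XGe ((R.jStar.obj B)⟦(1 : ℤ)⟧) :=
        hX.isoClosed_ge ((shiftFunctor X (1 : ℤ)).mapIso hiso).symm hX₂
      exact hX.isoClosed_ge ((R.jStar.commShiftIso (1 : ℤ)).app B).symm s1
    · -- YGe (iShriek (B⟦1⟧))
      -- iShriek (jUpper X₂) is zero
      obtain ⟨δ', hTr⟩ := R.triangle₁ (R.jUpper.obj X₂)
      haveI : IsIso (R.adj_j₂.unit.app (R.jUpper.obj X₂)) := inferInstance
      have hz1 : IsZero (R.iLower.obj (R.iShriek.obj (R.jUpper.obj X₂))) :=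
        Triangle.isZero₁_of_isIso₂ _ hTr (by exact ‹IsIso (R.adj_j₂.unit.app (R.jUpper.obj X₂))›)
      have hz2 : IsZero (R.iShriek.obj (R.jUpper.obj X₂)) := by
        rw [IsZero.iff_id_eq_zero]
        apply R.iLower.map_injective
        rw [CategoryTheory.Functor.map_id, Functor.map_zero]
        exact hz1.eq_of_src _ _
      haveI : IsIso (R.iShriek.map p) :=
        (Triangle.isZero₃_iff_isIso₁ _ (R.iShriek.map_distinguished _ hT1)).1 hz2
      have Φ := isoTriangleOfIso₁₂ (R.iShriek.mapTriangle.obj (Triangle.mk q n δ₂))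
        (R.iShriek.mapTriangle.obj (Triangle.mk (q ≫ p) u δ₃))
        (R.iShriek.map_distinguished _ hT2) (R.iShriek.map_distinguished _ hT3)
        (Iso.refl _) (@asIso _ _ _ _ (R.iShriek.map p) ‹IsIso (R.iShriek.map p)›) (by
          change R.iShriek.map q ≫ R.iShriek.map p = 𝟙 _ ≫ R.iShriek.map (q ≫ p)
          rw [Category.id_comp, ← Functor.map_comp])
      have hiso : R.iShriek.obj (R.iLower.obj Y₂) ≅ R.iShriek.obj B := Triangle.π₃.mapIso Φ
      haveI : IsIso (R.adj_i₂.unit.app Y₂) := inferInstance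
      have hiso2 : Y₂ ≅ R.iShriek.obj B := asIso (R.adj_i₂.unit.app Y₂) ≪≫ hiso
      have s1 : YGe ((R.iShriek.obj B)⟦(1 : ℤ)⟧) :=
        hY.isoClosed_ge ((shiftFunctor Y (1 : ℤ)).mapIso hiso2) hY₂
      exact hY.isoClosed_ge ((R.iShriek.commShiftIso (1 : ℤ)).app B).symm s1
end

section
/- Let D be a triangulated category with a recollement by Y and X, and let (D_{≥0}, D_{≤0}) be the co-t-structure glued from co-t-structures (Y_{≥0}, Y_{≤0}) and (X_{≥0}, X_{≤0}) associated with silting objects Y and X. Let β_{≥1}i^!j_!X → i^!j_!X → β_{≤0}i^!j_!X → (β_{≥1}i^!j_!X)[1] be a truncation triangle in Y, and define K_X by the triangle i_*β_{≥1}i^!j_!X → j_!X → K_X → (i_*β_{≥1}i^!j_!X)[1], where the first map corresponds via adjunction to β_{≥1}i^!j_!X → i^!j_!X. Then K_X lies in the co-heart D_{≥0} ∩ D_{≤0}. -/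
open CategoryTheory Limits Pretriangulated

open Glueing CategoryTheory Limits Pretriangulated in
/-- Glueing of silting objects: let `X₀`, `Y₀` be silting objects of `X`, `Y`, lying in
the co-hearts of the associated co-t-structures, and let `K` be defined by the triangle
`i_*β_{≥1}i^!j_!X₀ → j_!X₀ → K → (i_*β_{≥1}i^!j_!X₀)[1]`, where
`β_{≥1}i^!j_!X₀ → i^!j_!X₀ → β_{≤0}i^!j_!X₀ → ⋯` is a truncation triangle for the
co-t-structure on `Y` and the first map corresponds to `u` via the adjunction
`(i_*, i^!)`. Then `K` lies in the co-heart of the glued co-t-structure on `D`. -/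
theorem glued_silting_mem_coheart
    {D Y X : Type*} [Category D] [HasZeroObject D] [Preadditive D] [HasShift D ℤ]
    [∀ n : ℤ, (shiftFunctor D n).Additive] [Pretriangulated D]
    [Category Y] [HasZeroObject Y] [Preadditive Y] [HasShift Y ℤ]
    [∀ n : ℤ, (shiftFunctor Y n).Additive] [Pretriangulated Y]
    [Category X] [HasZeroObject X] [Preadditive X] [HasShift X ℤ]
    [∀ n : ℤ, (shiftFunctor X n).Additive] [Pretriangulated X]
    (R : Recollement D Y X)
    {XGe XLe : X → Prop} {YGe YLe : Y → Prop}
    (hX : IsCoTStructure X XGe XLe) (hY : IsCoTStructure Y YGe YLe)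
    {X₀ : X} {Y₀ : Y} (hsX : IsSilting X X₀) (hsY : IsSilting Y Y₀)
    (hX₀ : XGe X₀ ∧ XLe X₀) (hY₀ : YGe Y₀ ∧ YLe Y₀)
    {B₁ B₀ : Y} (hB₁ : YGe (B₁⟦(1 : ℤ)⟧)) (hB₀ : YLe B₀)
    {u : B₁ ⟶ R.iShriek.obj (R.jLower.obj X₀)}
    {v : R.iShriek.obj (R.jLower.obj X₀) ⟶ B₀} {w : B₀ ⟶ B₁⟦(1 : ℤ)⟧}
    (hTrunc : Triangle.mk u v w ∈ distinguishedTriangles)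
    {K : D} {g : R.jLower.obj X₀ ⟶ K} {h : K ⟶ (R.iLower.obj B₁)⟦(1 : ℤ)⟧}
    (hK : Triangle.mk ((R.adj_i₂.homEquiv B₁ (R.jLower.obj X₀)).symm u) g h ∈
      distinguishedTriangles) :
    (XGe (R.jStar.obj K) ∧ YGe (R.iStar.obj K)) ∧
      (XLe (R.jStar.obj K) ∧ YLe (R.iShriek.obj K)) := by
  haveI := R.iLower_full
  haveI := R.iLower_faithful
  haveI := R.jLower_full
  haveI := R.jLower_faithful
  letI := R.commShift_iStar
  letI := R.commShift_iShriek
  letI := R.commShift_jStar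
  haveI : R.iStar.IsTriangulated := R.isTriangulated_iStar
  haveI : R.iShriek.IsTriangulated := R.isTriangulated_iShriek
  haveI : R.jStar.IsTriangulated := R.isTriangulated_jStar
  -- Step A : j^* K ≅ X₀
  have hTj := R.jStar.map_distinguished _ hK
  have hz1 : IsZero ((R.jStar.mapTriangle.obj (Triangle.mk
      ((R.adj_i₂.homEquiv B₁ (R.jLower.obj X₀)).symm u) g h)).obj₁) :=
    R.jStar_iLower_zero B₁
  have hiso2 : IsIso (R.jStar.map g) :=
    (Triangle.isZero₁_iff_isIso₂ _ hTj).1 hz1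
  have eX : X₀ ≅ R.jStar.obj K :=
    (asIso (R.adj_j₁.unit.app X₀)) ≪≫ asIso (R.jStar.map g)
  -- Step B : i^* (j_! X₀) is zero
  obtain ⟨δ, hδ⟩ := R.triangle₂ (R.jLower.obj X₀)
  haveI : IsIso (R.adj_j₁.counit.app (R.jLower.obj X₀)) :=
    R.adj_j₁.isIso_counit_app_of_iso (Iso.refl _)
  have hz2 : IsZero (R.iLower.obj (R.iStar.obj (R.jLower.obj X₀))) :=
    Triangle.isZero₃_of_isIso₁ _ hδ (by assumption)
  have hz3 : IsZero (R.iStar.obj (R.jLower.obj X₀)) := by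
    rw [IsZero.iff_id_eq_zero]
    apply R.iLower.map_injective
    exact hz2.eq_of_src _ _
  -- Step C : i^* K ≅ B₁⟦1⟧
  have hTi := R.iStar.map_distinguished _ hK
  have hiso3 : IsIso ((R.iStar.mapTriangle.obj (Triangle.mk
      ((R.adj_i₂.homEquiv B₁ (R.jLower.obj X₀)).symm u) g h)).mor₃) :=
    (Triangle.isZero₂_iff_isIso₃ _ hTi).1 hz3
  haveI : IsIso (R.adj_i₁.counit.app B₁) := inferInstance
  have eY : R.iStar.obj K ≅ B₁⟦(1 : ℤ)⟧ :=
    (@asIso _ _ _ _ ((R.iStar.mapTriangle.obj (Triangle.mk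
      ((R.adj_i₂.homEquiv B₁ (R.jLower.obj X₀)).symm u) g h)).mor₃) hiso3) ≪≫
      (shiftFunctor Y (1 : ℤ)).mapIso (@asIso _ _ _ _ (R.adj_i₁.counit.app B₁)
        (NatIso.isIso_app_of_isIso R.adj_i₁.counit B₁))
  -- Step D : i^! K ≅ B₀
  have hTs := R.iShriek.map_distinguished _ hK
  have comm : u ≫ 𝟙 _ = (R.adj_i₂.unit.app B₁) ≫ R.iShriek.map
      ((R.adj_i₂.homEquiv B₁ (R.jLower.obj X₀)).symm u) := by
    have h2 := (R.adj_i₂.homEquiv B₁ (R.jLower.obj X₀)).apply_symm_apply u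
    rw [Adjunction.homEquiv_unit] at h2
    rw [Category.comp_id]
    exact h2.symm
  have eT := isoTriangleOfIso₁₂ _ _ hTrunc hTs (@asIso _ _ _ _ (R.adj_i₂.unit.app B₁)
    (NatIso.isIso_app_of_isIso R.adj_i₂.unit B₁))
    (Iso.refl _) (by exact comm)
  have eB : B₀ ≅ R.iShriek.obj K := Triangle.π₃.mapIso eT
  exact ⟨⟨hX.isoClosed_ge eX hX₀.1, hY.isoClosed_ge eY.symm hB₁⟩,
    ⟨hX.isoClosed_le eX hX₀.2, hY.isoClosed_le eB hB₀⟩⟩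
end

section
/- With notation as in the glueing construction (K_X defined by the triangle i_*β_{≥1}i^!j_!X → j_!X → K_X → (i_*β_{≥1}i^!j_!X)[1]), there is a triangle i_*β_{≤0}i^!j_!X → K_X → j_*X → (i_*β_{≤0}i^!j_!X)[1] in D. -/
open CategoryTheory Limits Pretriangulated

open Glueing CategoryTheory Limits Pretriangulated in
/-- With `K` defined by the triangle `i_*β_{≥1}i^!j_!X₀ → j_!X₀ → K → ⋯` as in the
glueing construction, there is a triangle `i_*β_{≤0}i^!j_!X₀ → K → j_*X₀ → ⋯` in `D`. -/
theorem glued_silting_second_triangle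
    {D Y X : Type*} [Category D] [HasZeroObject D] [Preadditive D] [HasShift D ℤ]
    [∀ n : ℤ, (shiftFunctor D n).Additive] [Pretriangulated D]
    [Category Y] [HasZeroObject Y] [Preadditive Y] [HasShift Y ℤ]
    [∀ n : ℤ, (shiftFunctor Y n).Additive] [Pretriangulated Y]
    [Category X] [HasZeroObject X] [Preadditive X] [HasShift X ℤ]
    [∀ n : ℤ, (shiftFunctor X n).Additive] [Pretriangulated X]
    [IsTriangulated D]
    (R : Recollement D Y X)
    {XGe XLe : X → Prop} {YGe YLe : Y → Prop}
    (hX : IsCoTStructure X XGe XLe) (hY : IsCoTStructure Y YGe YLe)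
    {X₀ : X}
    {B₁ B₀ : Y} (hB₁ : YGe (B₁⟦(1 : ℤ)⟧)) (hB₀ : YLe B₀)
    {u : B₁ ⟶ R.iShriek.obj (R.jLower.obj X₀)}
    {v : R.iShriek.obj (R.jLower.obj X₀) ⟶ B₀} {w : B₀ ⟶ B₁⟦(1 : ℤ)⟧}
    (hTrunc : Triangle.mk u v w ∈ distinguishedTriangles)
    {K : D} {g : R.jLower.obj X₀ ⟶ K} {h : K ⟶ (R.iLower.obj B₁)⟦(1 : ℤ)⟧}
    (hK : Triangle.mk ((R.adj_i₂.homEquiv B₁ (R.jLower.obj X₀)).symm u) g h ∈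
      distinguishedTriangles) :
    ∃ (a : R.iLower.obj B₀ ⟶ K) (b : K ⟶ R.jUpper.obj X₀)
      (c : R.jUpper.obj X₀ ⟶ (R.iLower.obj B₀)⟦(1 : ℤ)⟧),
      Triangle.mk a b c ∈ distinguishedTriangles := by
  letI := R.commShift_iLower
  letI := R.isTriangulated_iLower
  letI := R.jLower_full
  letI := R.jLower_faithful
  -- triangle 1: apply i_* to the truncation triangle
  have h12 : Triangle.mk (R.iLower.map u) (R.iLower.map v)
      (R.iLower.map w ≫ (R.iLower.commShiftIso (1 : ℤ)).hom.app B₁) ∈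
      distinguishedTriangles :=
    R.isTriangulated_iLower.map_distinguished _ hTrunc
  -- triangle 2: the canonical recollement triangle for j_!X₀
  obtain ⟨δ, h23⟩ := R.triangle₁ (R.jLower.obj X₀)
  -- the composite
  have comm : R.iLower.map u ≫ R.adj_i₂.counit.app (R.jLower.obj X₀) =
      (R.adj_i₂.homEquiv B₁ (R.jLower.obj X₀)).symm u :=
    (R.adj_i₂.homEquiv_counit B₁ (R.jLower.obj X₀) u).symm
  have O := Triangulated.someOctahedron comm h12 h23 hK
  -- identify the third object with j_* X₀
  have e : R.jUpper.obj (R.jStar.obj (R.jLower.obj X₀)) ≅ R.jUpper.obj X₀ :=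
    R.jUpper.mapIso (asIso (R.adj_j₁.unit.app X₀)).symm
  refine ⟨O.m₁, O.m₃ ≫ e.hom,
    e.inv ≫ δ ≫ ((R.iLower.map v)⟦(1 : ℤ)⟧'), ?_⟩
  refine isomorphic_distinguished _ O.mem _ (Triangle.isoMk _ _ (Iso.refl _) (Iso.refl _)
    e.symm ?_ ?_ ?_)
  · exact (Category.comp_id _).trans (Category.id_comp _).symm
  · exact ((Category.assoc _ _ _).trans ((congrArg (O.m₃ ≫ ·) e.hom_inv_id).trans (Category.comp_id _))).trans (Category.id_comp _).symm
  · exact ((congrArg (_ ≫ ·) ((shiftFunctor D (1 : ℤ)).map_id _)).trans (Category.comp_id _))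
end

section
/- Let D be a triangulated category with a recollement by Y and X, with glued co-t-structure (D_{≥0}, D_{≤0}) from co-t-structures on Y and X. Let K_X be as in the glueing construction. Then K_X is a right (D_{≥0} ∩ D_{≤0})-approximation of j_*X: every morphism from an object of the co-heart D_{≥0} ∩ D_{≤0} to j_*X factors through the canonical map K_X → j_*X. -/
open CategoryTheory Limits Pretriangulated

open Glueing CategoryTheory Limits Pretriangulated in
/-- `K` (sitting in a triangle `i_*β_{≤0}i^!j_!X₀ → K → j_*X₀ → ⋯`) is a right
approximation of `j_*X₀` by the co-heart of the glued co-t-structure: every morphism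
from an object of the co-heart to `j_*X₀` factors through `b : K ⟶ j_*X₀`. -/
theorem glued_silting_right_approximation
    {D Y X : Type*} [Category D] [HasZeroObject D] [Preadditive D] [HasShift D ℤ]
    [∀ n : ℤ, (shiftFunctor D n).Additive] [Pretriangulated D]
    [Category Y] [HasZeroObject Y] [Preadditive Y] [HasShift Y ℤ]
    [∀ n : ℤ, (shiftFunctor Y n).Additive] [Pretriangulated Y]
    [Category X] [HasZeroObject X] [Preadditive X] [HasShift X ℤ]
    [∀ n : ℤ, (shiftFunctor X n).Additive] [Pretriangulated X]
    (R : Recollement D Y X)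
    {XGe XLe : X → Prop} {YGe YLe : Y → Prop}
    (hX : IsCoTStructure X XGe XLe) (hY : IsCoTStructure Y YGe YLe)
    {X₀ : X} {Y₀ : Y} (hsX : IsSilting X X₀) (hsY : IsSilting Y Y₀)
    (hX₀ : XGe X₀ ∧ XLe X₀) (hY₀ : YGe Y₀ ∧ YLe Y₀)
    {B₀ : Y} (hB₀ : YLe B₀)
    {K : D} {a : R.iLower.obj B₀ ⟶ K} {b : K ⟶ R.jUpper.obj X₀}
    {c : R.jUpper.obj X₀ ⟶ (R.iLower.obj B₀)⟦(1 : ℤ)⟧}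
    (hT : Triangle.mk a b c ∈ distinguishedTriangles) :
    ∀ C : D, (XGe (R.jStar.obj C) ∧ YGe (R.iStar.obj C)) →
      (XLe (R.jStar.obj C) ∧ YLe (R.iShriek.obj C)) →
      ∀ f : C ⟶ R.jUpper.obj X₀, ∃ f' : C ⟶ K, f' ≫ b = f := by
  intro C hGe _hLe f
  letI := R.commShift_iLower
  letI := R.isTriangulated_iLower
  letI := R.commShift_jStar
  -- `j^*` of the target of `c` is zero
  have hz0 : IsZero ((R.jStar.obj (R.iLower.obj B₀))⟦(1 : ℤ)⟧) := by
    rw [IsZero.iff_id_eq_zero, ← (shiftFunctor X (1 : ℤ)).map_id,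
      (R.jStar_iLower_zero B₀).eq_of_tgt (𝟙 _) 0, Functor.map_zero]
  have hz : IsZero (R.jStar.obj ((R.iLower.obj B₀)⟦(1 : ℤ)⟧)) :=
    hz0.of_iso ((R.jStar.commShiftIso (1 : ℤ)).app (R.iLower.obj B₀))
  -- step 1: the composite from `j_! j^* C` is zero
  obtain ⟨δ, hT2⟩ := R.triangle₂ C
  have hε : R.adj_j₁.counit.app C ≫ (f ≫ c) = 0 := by
    have := (R.adj_j₁.homEquiv (R.jStar.obj C) _).injective
      (hz.eq_of_tgt (R.adj_j₁.homEquiv _ _ (R.adj_j₁.counit.app C ≫ (f ≫ c)))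
        (R.adj_j₁.homEquiv _ _ 0))
    simpa using this
  -- step 2: factor through `i_* i^* C`
  obtain ⟨k, hk⟩ := Triangle.yoneda_exact₂ _ hT2 (f ≫ c) hε
  -- step 3: `k = 0` by orthogonality in `Y`
  have eI : R.iLower.obj (B₀⟦(1 : ℤ)⟧) ≅ (R.iLower.obj B₀)⟦(1 : ℤ)⟧ := (R.iLower.commShiftIso (1 : ℤ)).app B₀
  letI := R.iLower_full
  obtain ⟨k', hk'⟩ := R.iLower.map_surjective (k ≫ eI.inv)
  have hk'0 : k' = 0 := hY.orthogonal hGe.2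
    (hY.isoClosed_le (shiftShiftNeg B₀ (1 : ℤ)).symm hB₀) k'
  have hk0 : k = 0 := by
    have : k ≫ eI.inv = 0 := hk'.symm.trans (by rw [hk'0, Functor.map_zero]; rfl)
    rw [← Category.comp_id k, ← eI.inv_hom_id, ← Category.assoc, this, zero_comp]
  have hfc : f ≫ c = 0 := hk.trans (by rw [hk0, comp_zero]; rfl)
  obtain ⟨f', hf'⟩ := Triangle.coyoneda_exact₃ _ hT f hfc
  exact ⟨f', hf'.symm⟩
end

section
/- Let D be a triangulated category with a recollement by Y and X, with glued co-t-structure (D_{≥0}, D_{≤0}). Suppose L is an object of D with j^*L ≅ X, i^*L ∈ Y_{≥0}, and i^!L ∈ Y_{≤0}, where X is the silting object of X. Then L is a right (D_{≥0} ∩ D_{≤0})-approximation of j_*X: every map from an object of the co-heart to j_*X factors through the canonical map L → j_*X (coming from the unit of the adjunction (j^*, j_*)). -/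
open CategoryTheory Limits Pretriangulated

open Glueing CategoryTheory Limits Pretriangulated in
/-- If `L` satisfies `j^*L ≅ X₀`, `i^*L ∈ Y_{≥0}` and `i^!L ∈ Y_{≤0}`, then `L` is a
right approximation of `j_*X₀` by the co-heart of the glued co-t-structure: every map
from an object of the co-heart to `j_*X₀` factors through the canonical map
`L → j_*j^*L ≅ j_*X₀` coming from the unit of the adjunction `(j^*, j_*)`. -/
theorem coheart_approximation_of_conditions
    {D Y X : Type*} [Category D] [HasZeroObject D] [Preadditive D] [HasShift D ℤ]
    [∀ n : ℤ, (shiftFunctor D n).Additive] [Pretriangulated D]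
    [Category Y] [HasZeroObject Y] [Preadditive Y] [HasShift Y ℤ]
    [∀ n : ℤ, (shiftFunctor Y n).Additive] [Pretriangulated Y]
    [Category X] [HasZeroObject X] [Preadditive X] [HasShift X ℤ]
    [∀ n : ℤ, (shiftFunctor X n).Additive] [Pretriangulated X]
    (R : Recollement D Y X)
    {XGe XLe : X → Prop} {YGe YLe : Y → Prop}
    (hX : IsCoTStructure X XGe XLe) (hY : IsCoTStructure Y YGe YLe)
    {X₀ : X} {Y₀ : Y} (hsX : IsSilting X X₀) (hsY : IsSilting Y Y₀)
    (hX₀ : XGe X₀ ∧ XLe X₀) (hY₀ : YGe Y₀ ∧ YLe Y₀)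
    {L : D} (e : R.jStar.obj L ≅ X₀)
    (hLge : YGe (R.iStar.obj L)) (hLle : YLe (R.iShriek.obj L)) :
    ∀ C : D, (XGe (R.jStar.obj C) ∧ YGe (R.iStar.obj C)) →
      (XLe (R.jStar.obj C) ∧ YLe (R.iShriek.obj C)) →
      ∀ f : C ⟶ R.jUpper.obj X₀,
        ∃ f' : C ⟶ L, f' ≫ (R.adj_j₂.unit.app L ≫ R.jUpper.map e.hom) = f := by
  intro C hCge hCle f
  obtain ⟨δ, hT⟩ := R.triangle₁ L
  -- the map g : C ⟶ j_* j^* L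
  set g : C ⟶ R.jUpper.obj (R.jStar.obj L) := f ≫ R.jUpper.map e.inv with hg
  -- additivity of iLower
  letI := R.commShift_iLower
  haveI := R.isTriangulated_iLower
  haveI : R.iLower.Additive := inferInstance
  -- the commutation-with-shift iso
  let φ : R.iLower.obj ((R.iShriek.obj L)⟦(1 : ℤ)⟧) ≅ (R.iLower.obj (R.iShriek.obj L))⟦(1 : ℤ)⟧ :=
    (R.iLower.commShiftIso (1 : ℤ)).app (R.iShriek.obj L)
  have hle : YLe (((R.iShriek.obj L)⟦(1 : ℤ)⟧)⟦(-1 : ℤ)⟧) :=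
    hY.isoClosed_le ((shiftFunctorCompIsoId Y (1 : ℤ) (-1) (by norm_num)).app
      (R.iShriek.obj L)).symm hLle
  have hzero : g ≫ δ = 0 := by
    have h1 : (g ≫ δ) ≫ φ.inv = 0 := by
      have h2 : (R.adj_i₁.homEquiv C ((R.iShriek.obj L)⟦(1 : ℤ)⟧)).symm ((g ≫ δ) ≫ φ.inv) = 0 :=
        hY.orthogonal hCge.2 hle _
      have := congrArg (R.adj_i₁.homEquiv C ((R.iShriek.obj L)⟦(1 : ℤ)⟧)) h2
      rw [Equiv.apply_symm_apply] at this
      rw [this, Adjunction.homEquiv_apply, Functor.map_zero, comp_zero]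
    rw [← cancel_mono φ.inv, zero_comp]
    exact h1
  obtain ⟨f', hf'⟩ : ∃ f' : C ⟶ L, g = f' ≫ R.adj_j₂.unit.app L :=
    Triangle.coyoneda_exact₃ _ hT g hzero
  refine ⟨f', ?_⟩
  have : f' ≫ R.adj_j₂.unit.app L = g := hf'.symm
  rw [← Category.assoc, this, hg, Category.assoc, ← Functor.map_comp, e.inv_hom_id,
    CategoryTheory.Functor.map_id, Category.comp_id]
end

section
/- Let D be a triangulated category, (D^{≤0}, D^{≥0}) a bounded t-structure on D with a Serre functor S on D. Suppose the t-structure is associated with a silting object T, meaning D^{≤0} = {Z : Hom(T, Z[i]) = 0 ∀ i > 0} and D^{≥0} = {Z : Hom(T, Z[i]) = 0 ∀ i < 0}. If S(T) lies in the heart D^{≤0} ∩ D^{≥0}, then T is tilting, i.e. Hom(T, T[k]) = 0 for all k ≠ 0. -/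
open CategoryTheory Limits Pretriangulated

open Glueing CategoryTheory Limits Pretriangulated in
/-- Let `T` be a silting object of a triangulated category `D` with Serre functor `S`,
with associated (bounded) t-structure `D^{≤0} = {Z : Hom(T, Z[i]) = 0 ∀ i > 0}`,
`D^{≥0} = {Z : Hom(T, Z[i]) = 0 ∀ i < 0}`. If `S(T)` lies in the heart, then `T` is
tilting, i.e. `Hom(T, T[k]) = 0` for all `k ≠ 0`. -/
theorem tilting_of_serre_mem_heart
    {K : Type*} [Field K]
    {D : Type*} [Category D] [HasZeroObject D] [Preadditive D] [Linear K D] [HasShift D ℤ]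
    [∀ n : ℤ, (shiftFunctor D n).Additive] [Pretriangulated D]
    [∀ A B : D, FiniteDimensional K (A ⟶ B)]
    (S : D ⥤ D) [S.IsEquivalence]
    (serre : ∀ A B : D, (A ⟶ B) ≃ₗ[K] Module.Dual K (B ⟶ S.obj A))
    (T : D) (hT : IsSilting D T)
    (ht : IsTStructure D (fun Z => ∀ i : ℤ, 0 < i → ∀ f : T ⟶ Z⟦i⟧, f = 0)
      (fun Z => ∀ i : ℤ, i < 0 → ∀ f : T ⟶ Z⟦i⟧, f = 0))
    (hbounded : ∀ Z : D,
      (∃ n : ℤ, ∀ i : ℤ, 0 < i → ∀ f : T ⟶ (Z⟦n⟧)⟦i⟧, f = 0) ∧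
      (∃ n : ℤ, ∀ i : ℤ, i < 0 → ∀ f : T ⟶ (Z⟦n⟧)⟦i⟧, f = 0))
    (hheart : (∀ i : ℤ, 0 < i → ∀ f : T ⟶ (S.obj T)⟦i⟧, f = 0) ∧
      (∀ i : ℤ, i < 0 → ∀ f : T ⟶ (S.obj T)⟦i⟧, f = 0)) :
    ∀ k : ℤ, k ≠ 0 → ∀ f : T ⟶ T⟦k⟧, f = 0 := by
  intro k hk f
  rcases lt_or_gt_of_ne hk with hneg | hpos
  · -- k < 0 : Serre duality
    have hall : ∀ g : (T⟦k⟧ : D) ⟶ S.obj T, g = 0 := by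
      intro g
      set e := (shiftEquiv D k).toAdjunction.homEquiv T (S.obj T) with he
      have hg' : e g = 0 := hheart.1 (-k) (by omega) (e g)
      have h2 : g = e.symm (e g) := (e.symm_apply_apply g).symm
      rw [hg'] at h2
      have h3 : e.symm 0 = 0 := by
        rw [he, Adjunction.homEquiv_counit]
        simp
      rw [h3] at h2
      exact h2
    have hdual : (serre T (T⟦k⟧)) f = 0 := by
      apply LinearMap.ext
      intro g
      rw [hall g]
      simp
    have := congrArg (serre T (T⟦k⟧)).symm hdual
    rwa [LinearEquiv.symm_apply_apply, map_zero] at this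
  · exact hT.1 k hpos f
end

section
/- Let A be an abelian category arising as the heart of a glued t-structure in a recollement situation, with the induced recollement of abelian categories (functors ᵖi^*, ᵖi_*, ᵖi^!, ᵖj_!, ᵖj^*, ᵖj_*). Let (T, F) be a torsion pair in A. Then (ᵖi^*(T), ᵖi^!(F)) is a torsion pair in the abelian category A_Y. -/
open CategoryTheory Limits

namespace Glueing

attribute [local instance] CategoryTheory.Limits.HasFiniteBiproducts.of_hasFiniteProducts


/-- A torsion pair `(T, F)` in an abelian category: both classes are closed under
isomorphisms, `Hom(T, F) = 0`, and every object is an extension of a torsion-free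
object by a torsion object. -/
structure AbTorsionPair {A : Type*} [Category A] [Abelian A] (T F : A → Prop) : Prop where
  isoClosed_t : ∀ {X Y : A}, (X ≅ Y) → T X → T Y
  isoClosed_f : ∀ {X Y : A}, (X ≅ Y) → F X → F Y
  orthogonal : ∀ {X Y : A}, T X → F Y → ∀ f : X ⟶ Y, f = 0
  exists_ses : ∀ M : A, ∃ (X Y : A) (f : X ⟶ M) (g : M ⟶ Y) (w : f ≫ g = 0),
    T X ∧ F Y ∧ Mono f ∧ Epi g ∧ (ShortComplex.mk f g w).Exact

variable (AY AD AX : Type*) [Category AY] [Abelian AY] [Category AD] [Abelian AD]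
  [Category AX] [Abelian AX]

/-- A recollement of abelian categories `A_Y → A_D → A_X`: adjoint triples
`ᵖi^* ⊣ ᵖi_* ⊣ ᵖi^!` and `ᵖj_! ⊣ ᵖj^* ⊣ ᵖj_*`, with `ᵖi_*` fully faithful and exact,
`ᵖj^*` exact, `ᵖj^*ᵖi_* = 0`, `ᵖi^*ᵖj_! = 0`, `ᵖj^*ᵖj_! ≅ id ≅ ᵖj^*ᵖj_*`,
`ᵖi_*(A_Y)` a Serre subcategory, and the two canonical four-term exact sequences
(encoded by exactness at the middle together with epi/mono conditions). -/
structure AbRecollement where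
  piStar : AD ⥤ AY
  piLower : AY ⥤ AD
  piShriek : AD ⥤ AY
  pjLower : AX ⥤ AD
  pjStar : AD ⥤ AX
  pjUpper : AX ⥤ AD
  adj_i₁ : piStar ⊣ piLower
  adj_i₂ : piLower ⊣ piShriek
  adj_j₁ : pjLower ⊣ pjStar
  adj_j₂ : pjStar ⊣ pjUpper
  piLower_full : piLower.Full
  piLower_faithful : piLower.Faithful
  piLower_preservesFiniteLimits : PreservesFiniteLimits piLower
  piLower_preservesFiniteColimits : PreservesFiniteColimits piLower
  pjStar_preservesFiniteLimits : PreservesFiniteLimits pjStar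
  pjStar_preservesFiniteColimits : PreservesFiniteColimits pjStar
  pjStar_piLower_zero : ∀ A : AY, IsZero (pjStar.obj (piLower.obj A))
  piStar_pjLower_zero : ∀ B : AX, IsZero (piStar.obj (pjLower.obj B))
  unit_j₁_iso : IsIso adj_j₁.unit
  counit_j₂_iso : IsIso adj_j₂.counit
  serre : ∀ S : ShortComplex AD, S.ShortExact →
    (piLower.essImage S.X₂ ↔ (piLower.essImage S.X₁ ∧ piLower.essImage S.X₃))
  epi_unit_i₁ : ∀ A : AD, Epi (adj_i₁.unit.app A)
  mono_counit_i₂ : ∀ A : AD, Mono (adj_i₂.counit.app A)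
  comp_zero₁ : ∀ A : AD, adj_j₁.counit.app A ≫ adj_i₁.unit.app A = 0
  exact₁ : ∀ A : AD, (ShortComplex.mk _ _ (comp_zero₁ A)).Exact
  comp_zero₂ : ∀ A : AD, adj_i₂.counit.app A ≫ adj_j₂.unit.app A = 0
  exact₂ : ∀ A : AD, (ShortComplex.mk _ _ (comp_zero₂ A)).Exact

/-- `B` lies in the additive closure `add M`: it is a direct summand of a finite
direct sum of copies of `M`. -/
def InAdd {A : Type*} [Category A] [Abelian A] (M B : A) : Prop :=
  letI : HasFiniteBiproducts A := HasFiniteBiproducts.of_hasFiniteProducts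
  ∃ (n : ℕ) (s : B ⟶ ⨁ fun _ : Fin n => M) (r : (⨁ fun _ : Fin n => M) ⟶ B),
    s ≫ r = 𝟙 B

end Glueing

open Glueing CategoryTheory Limits in
/-- Restriction of a torsion pair along a recollement of abelian categories: if
`(T, F)` is a torsion pair in `A_D`, then `(ᵖi^*(T), ᵖi^!(F))` is a torsion pair
in `A_Y` (image classes taken up to isomorphism). -/
theorem abRecollement_restrict_torsionPair
    {AY AD AX : Type*} [Category AY] [Abelian AY] [Category AD] [Abelian AD]
    [Category AX] [Abelian AX]
    (R : Glueing.AbRecollement AY AD AX)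
    {T F : AD → Prop} (h : AbTorsionPair T F) :
    AbTorsionPair (fun B : AY => ∃ A : AD, T A ∧ Nonempty (R.piStar.obj A ≅ B))
      (fun B : AY => ∃ A : AD, F A ∧ Nonempty (R.piShriek.obj A ≅ B)) := by
  haveI := R.piLower_full
  haveI := R.piLower_faithful
  haveI := R.piLower_preservesFiniteLimits
  haveI := R.piLower_preservesFiniteColimits
  haveI : R.piLower.IsLeftAdjoint := ⟨_, ⟨R.adj_i₂⟩⟩
  haveI : R.piShriek.IsRightAdjoint := ⟨_, ⟨R.adj_i₂⟩⟩
  constructor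
  · rintro X Y e ⟨A, hA, ⟨i⟩⟩; exact ⟨A, hA, ⟨i ≪≫ e⟩⟩
  · rintro X Y e ⟨A, hA, ⟨i⟩⟩; exact ⟨A, hA, ⟨i ≪≫ e⟩⟩
  · rintro X Y ⟨A, hA, ⟨i⟩⟩ ⟨A', hA', ⟨i'⟩⟩ f
    have hfg : f = i.inv ≫ (i.hom ≫ f ≫ i'.inv) ≫ i'.hom := by simp
    set g : R.piStar.obj A ⟶ R.piShriek.obj A' := i.hom ≫ f ≫ i'.inv with hg
    have hzero : (R.adj_i₂.homEquiv (R.piStar.obj A) A').symm g = 0 := by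
      haveI := R.epi_unit_i₁ A
      rw [← cancel_epi (R.adj_i₁.unit.app A)]
      have horth := h.orthogonal hA hA'
        (R.adj_i₁.unit.app A ≫ (R.adj_i₂.homEquiv (R.piStar.obj A) A').symm g)
      simpa using horth
    have hg0 : g = 0 := by
      have := congrArg (R.adj_i₂.homEquiv (R.piStar.obj A) A') hzero
      rw [Equiv.apply_symm_apply] at this
      rw [this, Adjunction.homEquiv_unit, Functor.map_zero, comp_zero]
    rw [hfg, hg0, zero_comp, comp_zero]
  · intro M
    obtain ⟨X, Y, f, g, w, hT, hF, hm, he, hex⟩ := h.exists_ses (R.piLower.obj M)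
    haveI := hm; haveI := he
    have hSE : (ShortComplex.mk f g w).ShortExact := ⟨hex⟩
    obtain ⟨⟨X', ⟨eX⟩⟩, ⟨Y', ⟨eY⟩⟩⟩ := (R.serre _ hSE).mp ⟨M, ⟨Iso.refl _⟩⟩
    set f' : X' ⟶ M := R.piLower.preimage (eX.hom ≫ f) with hf'
    set g' : M ⟶ Y' := R.piLower.preimage (g ≫ eY.inv) with hg'
    have w' : f' ≫ g' = 0 := by
      apply R.piLower.map_injective
      simp [hf', hg', reassoc_of% w]
    refine ⟨X', Y', f', g', w', ⟨X, hT,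
        ⟨R.piStar.mapIso eX.symm ≪≫ asIso (R.adj_i₁.counit.app X')⟩⟩,
      ⟨Y, hF, ⟨R.piShriek.mapIso eY.symm ≪≫ (asIso (R.adj_i₂.unit.app Y')).symm⟩⟩,
      ?_, ?_, ?_⟩
    · apply R.piLower.mono_of_mono_map (f := f')
      rw [hf', Functor.map_preimage]
      exact mono_comp _ _
    · apply R.piLower.epi_of_epi_map (f := g')
      rw [hg', Functor.map_preimage]
      exact epi_comp _ _
    · rw [← ShortComplex.exact_map_iff_of_faithful _ R.piLower]
      have e : (ShortComplex.mk f' g' w').map R.piLower ≅ ShortComplex.mk f g w :=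
        ShortComplex.isoMk eX (Iso.refl _) eY
          (by simp [hf']; exact (Category.comp_id _).symm)
          (by simp [hg']; exact (Category.id_comp g).trans (by simp : g = (g ≫ eY.inv) ≫ eY.hom))
      exact (ShortComplex.exact_iff_of_iso e).mpr hex
end

section
/- With the abelian recollement as above and a torsion pair (T, F) in A_D, the following are equivalent: (i) (ᵖj^*(T), ᵖj^*(F)) is a torsion pair in A_X; (ii) ᵖj_!ᵖj^*(T) ⊆ T; (iii) ᵖj_*ᵖj^*(F) ⊆ F. -/
open CategoryTheory Limits

namespace Glueing

attribute [local instance] CategoryTheory.Limits.HasFiniteBiproducts.of_hasFiniteProducts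


variable (AY AD AX : Type*) [Category AY] [Abelian AY] [Category AD] [Abelian AD]
  [Category AX] [Abelian AX]

end Glueing

section Aux

open CategoryTheory Limits

variable {C D : Type*} [Category C] [Category D]

private lemma aux_homEquiv_zero [HasZeroMorphisms C] [HasZeroMorphisms D]
    {F : C ⥤ D} {G : D ⥤ C} (adj : F ⊣ G) (X : C) (Y : D) :
    adj.homEquiv X Y 0 = 0 := by
  haveI := adj.isRightAdjoint
  rw [Adjunction.homEquiv_unit, Functor.map_zero, comp_zero]

private lemma aux_homEquiv_symm_zero [HasZeroMorphisms C] [HasZeroMorphisms D]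
    {F : C ⥤ D} {G : D ⥤ C} (adj : F ⊣ G) (X : C) (Y : D) :
    (adj.homEquiv X Y).symm 0 = 0 := by
  haveI := adj.isLeftAdjoint
  rw [Adjunction.homEquiv_counit, Functor.map_zero, zero_comp]

private lemma aux_eq_zero_of_homEquiv_eq_zero [HasZeroMorphisms C] [HasZeroMorphisms D]
    {F : C ⥤ D} {G : D ⥤ C} (adj : F ⊣ G) {X : C} {Y : D} {f : F.obj X ⟶ Y}
    (hf : adj.homEquiv X Y f = 0) : f = 0 :=
  (adj.homEquiv X Y).injective (by rw [hf, aux_homEquiv_zero])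

private lemma aux_eq_zero_of_homEquiv_symm_eq_zero [HasZeroMorphisms C] [HasZeroMorphisms D]
    {F : C ⥤ D} {G : D ⥤ C} (adj : F ⊣ G) {X : C} {Y : D} {f : X ⟶ G.obj Y}
    (hf : (adj.homEquiv X Y).symm f = 0) : f = 0 :=
  (adj.homEquiv X Y).symm.injective (by rw [hf, aux_homEquiv_symm_zero])

variable [Abelian C]

private lemma aux_isIso_f {X M Y : C} (f : X ⟶ M) (g : M ⟶ Y) (w : f ≫ g = 0)
    (hm : Mono f) (hex : (ShortComplex.mk f g w).Exact) (hg : g = 0) : IsIso f := by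
  haveI := hm
  haveI : Epi f := hex.epi_f hg
  exact isIso_of_mono_of_epi f

private lemma aux_isIso_g {X M Y : C} (f : X ⟶ M) (g : M ⟶ Y) (w : f ≫ g = 0)
    (he : Epi g) (hex : (ShortComplex.mk f g w).Exact) (hf : f = 0) : IsIso g := by
  haveI := he
  haveI : Mono g := hex.mono_g hf
  exact isIso_of_mono_of_epi g

end Aux


open Glueing CategoryTheory Limits in
/-- For a torsion pair `(T, F)` in `A_D` and a recollement of abelian categories,
the following are equivalent: (i) `(ᵖj^*(T), ᵖj^*(F))` is a torsion pair in `A_X`;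
(ii) `ᵖj_!ᵖj^*(T) ⊆ T`; (iii) `ᵖj_*ᵖj^*(F) ⊆ F`. -/
theorem abRecollement_jStar_torsionPair_iff
    {AY AD AX : Type*} [Category AY] [Abelian AY] [Category AD] [Abelian AD]
    [Category AX] [Abelian AX]
    (R : Glueing.AbRecollement AY AD AX)
    {T F : AD → Prop} (h : AbTorsionPair T F) :
    (AbTorsionPair (fun B : AX => ∃ A : AD, T A ∧ Nonempty (R.pjStar.obj A ≅ B))
        (fun B : AX => ∃ A : AD, F A ∧ Nonempty (R.pjStar.obj A ≅ B)) ↔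
      (∀ A : AD, T A → T (R.pjLower.obj (R.pjStar.obj A)))) ∧
    ((∀ A : AD, T A → T (R.pjLower.obj (R.pjStar.obj A))) ↔
      (∀ A : AD, F A → F (R.pjUpper.obj (R.pjStar.obj A)))) := by
  haveI := R.pjStar_preservesFiniteLimits
  haveI := R.pjStar_preservesFiniteColimits
  haveI := R.adj_j₁.isRightAdjoint
  haveI := R.unit_j₁_iso
  -- orthogonality in `AX` assuming (ii)
  have key_orth : (∀ A : AD, T A → T (R.pjLower.obj (R.pjStar.obj A))) →
      ∀ {A A' : AD}, T A → F A' → ∀ f : R.pjStar.obj A ⟶ R.pjStar.obj A', f = 0 := by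
    intro hii A A' hA hA' f
    apply aux_eq_zero_of_homEquiv_symm_eq_zero R.adj_j₁
    exact h.orthogonal (hii A hA) hA' _
  -- (ii) → (iii)
  have ii_iii : (∀ A : AD, T A → T (R.pjLower.obj (R.pjStar.obj A))) →
      ∀ A : AD, F A → F (R.pjUpper.obj (R.pjStar.obj A)) := by
    intro hii A hA
    obtain ⟨X, Y, f, g, w, hTX, hFY, hm, he, hex⟩ :=
      h.exists_ses (R.pjUpper.obj (R.pjStar.obj A))
    have hf0 : f = 0 := by
      apply aux_eq_zero_of_homEquiv_symm_eq_zero R.adj_j₂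
      exact key_orth hii hTX hA _
    haveI := aux_isIso_g f g w he hex hf0
    exact h.isoClosed_f (asIso g).symm hFY
  -- (iii) → (ii)
  have iii_ii : (∀ A : AD, F A → F (R.pjUpper.obj (R.pjStar.obj A))) →
      ∀ A : AD, T A → T (R.pjLower.obj (R.pjStar.obj A)) := by
    intro hiii A hA
    obtain ⟨X, Y, f, g, w, hTX, hFY, hm, he, hex⟩ :=
      h.exists_ses (R.pjLower.obj (R.pjStar.obj A))
    have hg0 : g = 0 := by
      apply aux_eq_zero_of_homEquiv_eq_zero R.adj_j₁
      apply aux_eq_zero_of_homEquiv_eq_zero R.adj_j₂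
      exact h.orthogonal hA (hiii Y hFY) _
    haveI := aux_isIso_f f g w hm hex hg0
    exact h.isoClosed_t (asIso f) hTX
  -- (i) → (ii)
  have i_ii : AbTorsionPair (fun B : AX => ∃ A : AD, T A ∧ Nonempty (R.pjStar.obj A ≅ B))
      (fun B : AX => ∃ A : AD, F A ∧ Nonempty (R.pjStar.obj A ≅ B)) →
      ∀ A : AD, T A → T (R.pjLower.obj (R.pjStar.obj A)) := by
    intro hi A hA
    obtain ⟨X, Y, f, g, w, hTX, hFY, hm, he, hex⟩ :=
      h.exists_ses (R.pjLower.obj (R.pjStar.obj A))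
    have hg0 : g = 0 := by
      apply aux_eq_zero_of_homEquiv_eq_zero R.adj_j₁
      exact hi.orthogonal ⟨A, hA, ⟨Iso.refl _⟩⟩ ⟨Y, hFY, ⟨Iso.refl _⟩⟩ _
    haveI := aux_isIso_f f g w hm hex hg0
    exact h.isoClosed_t (asIso f) hTX
  -- (ii) → (i)
  have ii_i : (∀ A : AD, T A → T (R.pjLower.obj (R.pjStar.obj A))) →
      AbTorsionPair (fun B : AX => ∃ A : AD, T A ∧ Nonempty (R.pjStar.obj A ≅ B))
        (fun B : AX => ∃ A : AD, F A ∧ Nonempty (R.pjStar.obj A ≅ B)) := by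
    intro hii
    constructor
    · rintro X Y e ⟨A, hA, ⟨e'⟩⟩
      exact ⟨A, hA, ⟨e'.trans e⟩⟩
    · rintro X Y e ⟨A, hA, ⟨e'⟩⟩
      exact ⟨A, hA, ⟨e'.trans e⟩⟩
    · rintro X Y ⟨A, hA, ⟨eA⟩⟩ ⟨A', hA', ⟨eA'⟩⟩ f
      have h0 : eA.hom ≫ f ≫ eA'.inv = 0 := key_orth hii hA hA' _
      have h1 := congrArg (fun t => eA.inv ≫ t ≫ eA'.hom) h0
      simpa using h1
    · intro M
      obtain ⟨X, Y, f, g, w, hTX, hFY, hm, he, hex⟩ := h.exists_ses (R.pjLower.obj M)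
      haveI := hm; haveI := he
      let e : M ≅ R.pjStar.obj (R.pjLower.obj M) := asIso (R.adj_j₁.unit.app M)
      have w' : (R.pjStar.map f ≫ e.inv) ≫ (e.hom ≫ R.pjStar.map g) = 0 := by
        rw [Category.assoc, Iso.inv_hom_id_assoc, ← Functor.map_comp, w,
          Functor.map_zero]
      refine ⟨R.pjStar.obj X, R.pjStar.obj Y, R.pjStar.map f ≫ e.inv,
        e.hom ≫ R.pjStar.map g, w', ⟨X, hTX, ⟨Iso.refl _⟩⟩, ⟨Y, hFY, ⟨Iso.refl _⟩⟩,
        ?_, ?_, ?_⟩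
      · exact mono_comp _ _
      · exact epi_comp _ _
      · have hmap : ((ShortComplex.mk f g w).map R.pjStar).Exact := hex.map R.pjStar
        exact (ShortComplex.exact_iff_of_iso
          (ShortComplex.isoMk (S₁ := (ShortComplex.mk f g w).map R.pjStar)
            (S₂ := ShortComplex.mk _ _ w') (Iso.refl _) e.symm (Iso.refl _)
            (by exact Category.id_comp (R.pjStar.map f ≫ e.inv))
            (by show e.inv ≫ e.hom ≫ R.pjStar.map g = R.pjStar.map g ≫ 𝟙 _
                rw [Iso.inv_hom_id_assoc, Category.comp_id]))).1 hmap
  exact ⟨⟨i_ii, ii_i⟩, ⟨ii_iii, iii_ii⟩⟩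
end

section
/- Let (D^{≤0}, D^{≥0}) be a bounded t-structure on a triangulated category D with heart A and cohomology functors H^i, and let (T, F) be a torsion pair in A. Define the HRS-tilt: D̃^{≤0} = {E : H^i(E) = 0 ∀ i > 0, H^0(E) ∈ T} and D̃^{≥0} = {E : H^i(E) = 0 ∀ i < -1, H^{-1}(E) ∈ F}. Then (D̃^{≤0}, D̃^{≥0}) is a t-structure on D and satisfies D^{≤-1} ⊆ D̃^{≤0} ⊆ D^{≤0}. -/
open CategoryTheory Limits Pretriangulated

namespace Glueing

open CategoryTheory Limits Pretriangulated

variable {D : Type*} [Category D] [HasZeroObject D] [Preadditive D] [HasShift D ℤ]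
  [∀ n : ℤ, (shiftFunctor D n).Additive] [Pretriangulated D]

/-- A torsion pair `(T, F)` in the heart of a t-structure `(Le, Ge)`, expressed inside
the ambient triangulated category: both classes consist of heart objects, are closed
under isomorphisms, are Hom-orthogonal, and every heart object is an extension (a
distinguished triangle) of an object of `F` by an object of `T`. -/
structure HeartTorsionPair (Le Ge T F : D → Prop) : Prop where
  mem_heart_t : ∀ A : D, T A → Le A ∧ Ge A
  mem_heart_f : ∀ A : D, F A → Le A ∧ Ge A
  isoClosed_t : ∀ {A B : D}, (A ≅ B) → T A → T B
  isoClosed_f : ∀ {A B : D}, (A ≅ B) → F A → F B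
  orthogonal : ∀ {A B : D}, T A → F B → ∀ f : A ⟶ B, f = 0
  exists_triangle : ∀ A : D, Le A → Ge A →
    ∃ (To Fo : D) (f : To ⟶ A) (g : A ⟶ Fo) (h : Fo ⟶ To⟦(1 : ℤ)⟧),
      T To ∧ F Fo ∧ Triangle.mk f g h ∈ distinguishedTriangles

/-- The aisle of the HRS-tilt of a t-structure `(Le, Ge)` with respect to a torsion
pair `(T, F)` in its heart: `E ∈ D̃^{≤0}` iff `H^i(E) = 0` for `i > 0` and
`H^0(E) ∈ T`, i.e. iff there is a triangle `A → E → B → A[1]` with `A ∈ D^{≤-1}`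
and `B` a heart object lying in `T`. -/
def TiltLe (Le Ge T : D → Prop) (E : D) : Prop :=
  ∃ (A B : D) (f : A ⟶ E) (g : E ⟶ B) (h : B ⟶ A⟦(1 : ℤ)⟧),
    Le (A⟦(-1 : ℤ)⟧) ∧ (Le B ∧ Ge B) ∧ T B ∧
      Triangle.mk f g h ∈ distinguishedTriangles

/-- The coaisle of the HRS-tilt of a t-structure `(Le, Ge)` with respect to a torsion
pair `(T, F)` in its heart: `E ∈ D̃^{≥0}` iff `H^i(E) = 0` for `i < -1` and
`H^{-1}(E) ∈ F`, i.e. iff there is a triangle `A → E → B → A[1]` with `A[-1]` a heart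
object lying in `F` and `B ∈ D^{≥0}`. -/
def TiltGe (Le Ge F : D → Prop) (E : D) : Prop :=
  ∃ (A B : D) (f : A ⟶ E) (g : E ⟶ B) (h : B ⟶ A⟦(1 : ℤ)⟧),
    (Le (A⟦(-1 : ℤ)⟧) ∧ Ge (A⟦(-1 : ℤ)⟧)) ∧ F (A⟦(-1 : ℤ)⟧) ∧ Ge B ∧
      Triangle.mk f g h ∈ distinguishedTriangles

end Glueing

namespace CategoryTheory
namespace HRS

open CategoryTheory Limits Pretriangulated Glueing ZeroObject

variable {D : Type*} [Category D] [HasZeroObject D] [Preadditive D] [HasShift D ℤ]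
  [∀ n : ℤ, (shiftFunctor D n).Additive] [Pretriangulated D]
variable {Le Ge T F : D → Prop}

omit [HasZeroObject D] [Pretriangulated D] in
lemma shift_cancel {X Y : D} {f : X ⟶ Y} (h : (shiftFunctor D (1 : ℤ)).map f = 0) :
    f = 0 :=
  (shiftFunctor D (1 : ℤ)).map_injective (by rw [h, Functor.map_zero])

omit [HasZeroObject D] [Pretriangulated D] in
lemma shift_cancel_neg {X Y : D} {f : X ⟶ Y} (h : (shiftFunctor D (-1 : ℤ)).map f = 0) :
    f = 0 :=
  (shiftFunctor D (-1 : ℤ)).map_injective (by rw [h, Functor.map_zero])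

omit [HasZeroObject D] [Pretriangulated D] in
lemma shift_hom_zero {A B : D} (h : ∀ g : A ⟶ B, g = 0) (τ : A⟦(1 : ℤ)⟧ ⟶ B⟦(1 : ℤ)⟧) :
    τ = 0 := by
  obtain ⟨g, rfl⟩ := (shiftFunctor D (1 : ℤ)).map_surjective τ
  rw [h g, Functor.map_zero]

omit [HasZeroObject D] [Pretriangulated D] in
lemma isZero_shift {X : D} (h : IsZero X) (n : ℤ) : IsZero (X⟦n⟧) := by
  rw [IsZero.iff_id_eq_zero] at h ⊢
  rw [show 𝟙 (X⟦n⟧) = (shiftFunctor D n).map (𝟙 X) from (Functor.map_id _ _).symm, h,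
    Functor.map_zero]

lemma le_up (ht : IsTStructure D Le Ge) {X : D} (h : Le (X⟦(-1 : ℤ)⟧)) : Le X :=
  ht.isoClosed_le (shiftNegShift X (1 : ℤ)) (ht.shift_le _ h)

lemma ge_down (ht : IsTStructure D Le Ge) {X : D} (h : Ge (X⟦(1 : ℤ)⟧)) : Ge X :=
  ht.isoClosed_ge (shiftShiftNeg X (1 : ℤ)) (ht.shift_ge _ h)

/-- `Hom(D^{≤-1}, D^{≥0}) = 0`, in the form `Le (A⟦-1⟧) → Ge B → Hom(A, B) = 0`. -/
lemma o2 (ht : IsTStructure D Le Ge) {A B : D} (hA : Le (A⟦(-1 : ℤ)⟧)) (hB : Ge B)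
    (f : A ⟶ B) : f = 0 :=
  shift_cancel_neg
    (ht.orthogonal hA (ht.isoClosed_ge (shiftNegShift B (1 : ℤ)).symm hB) _)

/-- `Hom(D^{≤-2}, D^{≥-1}) = 0`. -/
lemma o2' (ht : IsTStructure D Le Ge) {A B : D} (hA : Le ((A⟦(-1 : ℤ)⟧)⟦(-1 : ℤ)⟧))
    (hB : Ge (B⟦(-1 : ℤ)⟧)) (f : A ⟶ B) : f = 0 :=
  shift_cancel_neg (o2 ht hA hB _)

lemma le_of_isZero (ht : IsTStructure D Le Ge) {X : D} (h : IsZero X) : Le X := by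
  obtain ⟨A, B, f, g, h', hA, hB, hd⟩ := ht.exists_triangle X
  exact ht.summands_le (0 : X ⟶ A) 0 (h.eq_of_src _ _) hA

lemma ge_of_isZero (ht : IsTStructure D Le Ge) {X : D} (h : IsZero X) : Ge X := by
  obtain ⟨A, B, f, g, h', hA, hB, hd⟩ := ht.exists_triangle X
  exact ht.summands_ge (0 : X ⟶ B⟦(1 : ℤ)⟧) 0 (h.eq_of_src _ _) hB

lemma charLe (ht : IsTStructure D Le Ge) (E : D)
    (h : ∀ B, Ge (B⟦(1 : ℤ)⟧) → ∀ f : E ⟶ B, f = 0) : Le E := by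
  obtain ⟨A, B, f, g, h', hA, hB, hd⟩ := ht.exists_triangle E
  obtain ⟨s, hs⟩ := Triangle.coyoneda_exact₂ _ hd (𝟙 E) (by
    dsimp [Triangle.mk, Triangle.rotate]; rw [Category.id_comp]; exact h B hB g)
  dsimp [Triangle.mk, Triangle.rotate] at hs
  exact ht.summands_le s f hs.symm hA

lemma charGe (ht : IsTStructure D Le Ge) (E : D)
    (h : ∀ A, Le A → ∀ f : A ⟶ E, f = 0) : Ge (E⟦(1 : ℤ)⟧) := by
  obtain ⟨A, B, f, g, h', hA, hB, hd⟩ := ht.exists_triangle E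
  obtain ⟨r, hr⟩ := Triangle.yoneda_exact₂ _ hd (𝟙 E) (by
    dsimp [Triangle.mk, Triangle.rotate]; rw [Category.comp_id]; exact h A hA f)
  dsimp [Triangle.mk, Triangle.rotate] at hr
  refine ht.summands_ge ((shiftFunctor D (1 : ℤ)).map g) ((shiftFunctor D (1 : ℤ)).map r)
    ?_ hB
  erw [← Functor.map_comp, ← hr, Functor.map_id]

lemma charGe₀ (ht : IsTStructure D Le Ge) (E : D)
    (h : ∀ A, Le A → ∀ f : A ⟶ E⟦(-1 : ℤ)⟧, f = 0) : Ge E :=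
  ht.isoClosed_ge (shiftNegShift E (1 : ℤ)) (charGe ht _ h)

lemma le_ext (ht : IsTStructure D Le Ge) (Tr : Triangle D)
    (hTr : Tr ∈ distinguishedTriangles) (h₁ : Le Tr.obj₁) (h₃ : Le Tr.obj₃) :
    Le Tr.obj₂ := by
  refine charLe ht _ (fun B hB ξ => ?_)
  obtain ⟨ψ, hψ⟩ := Triangle.yoneda_exact₂ _ hTr ξ (ht.orthogonal h₁ hB _)
  rw [hψ, ht.orthogonal h₃ hB ψ, comp_zero]

lemma t_isZero (ht : IsTStructure D Le Ge) (htf : HeartTorsionPair Le Ge T F)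
    {X : D} (h : IsZero X) : T X := by
  obtain ⟨t, f, u, v, w, hTt, hFf, hd⟩ := htf.exists_triangle (0 : D)
    (le_of_isZero ht (isZero_zero D)) (ge_of_isZero ht (isZero_zero D))
  have hu1 : (shiftFunctor D (1 : ℤ)).map u = 0 :=
    (isZero_shift (isZero_zero D) 1).eq_of_tgt _ _
  obtain ⟨p, hp⟩ := Triangle.coyoneda_exact₃ _ (rot_of_distTriang _ hd)
    (𝟙 (t⟦(1 : ℤ)⟧)) (by dsimp [Triangle.mk, Triangle.rotate]; rw [hu1, neg_zero, comp_zero]; rfl)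
  dsimp [Triangle.mk, Triangle.rotate] at hp
  have hGet1 : Ge (t⟦(1 : ℤ)⟧) :=
    ht.summands_ge p w hp.symm (htf.mem_heart_f f hFf).2
  have hzt : IsZero t := (IsZero.iff_id_eq_zero t).mpr
    (ht.orthogonal (htf.mem_heart_t t hTt).1 hGet1 (𝟙 t))
  exact htf.isoClosed_t (hzt.iso h) hTt

lemma f_isZero (ht : IsTStructure D Le Ge) (htf : HeartTorsionPair Le Ge T F)
    {X : D} (h : IsZero X) : F X := by
  obtain ⟨t, f, u, v, w, hTt, hFf, hd⟩ := htf.exists_triangle (0 : D)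
    (le_of_isZero ht (isZero_zero D)) (ge_of_isZero ht (isZero_zero D))
  have hu1 : (shiftFunctor D (1 : ℤ)).map u = 0 :=
    (isZero_shift (isZero_zero D) 1).eq_of_tgt _ _
  obtain ⟨p, hp⟩ := Triangle.coyoneda_exact₃ _ (rot_of_distTriang _ hd)
    (𝟙 (t⟦(1 : ℤ)⟧)) (by dsimp [Triangle.mk, Triangle.rotate]; rw [hu1, neg_zero, comp_zero]; rfl)
  dsimp [Triangle.mk, Triangle.rotate] at hp
  have hGet1 : Ge (t⟦(1 : ℤ)⟧) :=
    ht.summands_ge p w hp.symm (htf.mem_heart_f f hFf).2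
  have hzt : IsZero t := (IsZero.iff_id_eq_zero t).mpr
    (ht.orthogonal (htf.mem_heart_t t hTt).1 hGet1 (𝟙 t))
  obtain ⟨p', hp'⟩ := Triangle.yoneda_exact₃ _ hd (𝟙 f) (by
    dsimp [Triangle.mk, Triangle.rotate]; rw [Category.comp_id]; exact (isZero_zero D).eq_of_src _ _)
  dsimp [Triangle.mk, Triangle.rotate] at hp'
  have hw : w = 0 := (isZero_shift hzt 1).eq_of_tgt _ _
  have hzf : IsZero f := (IsZero.iff_id_eq_zero f).mpr (by rw [hp', hw]; exact zero_comp)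
  exact htf.isoClosed_f (hzf.iso h) hFf

lemma truncA (ht : IsTStructure D Le Ge) (E : D) :
    ∃ (P Q : D) (p : P ⟶ E) (q : E ⟶ Q) (hq : Q ⟶ P⟦(1 : ℤ)⟧),
      Le (P⟦(-1 : ℤ)⟧) ∧ Ge Q ∧ (Le E → Le Q) ∧
        Triangle.mk p q hq ∈ distinguishedTriangles := by
  obtain ⟨A', B', f₀, g₀, h₀, hA', hB', hd⟩ := ht.exists_triangle (E⟦(-1 : ℤ)⟧)
  have hd3 := rot_of_distTriang _ (rot_of_distTriang _ (rot_of_distTriang _ hd))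
  have hdT : Triangle.mk
      (-((shiftFunctor D (1 : ℤ)).map f₀) ≫ (shiftNegShift E (1 : ℤ)).hom)
      ((shiftNegShift E (1 : ℤ)).inv ≫ (-((shiftFunctor D (1 : ℤ)).map g₀)))
      (-((shiftFunctor D (1 : ℤ)).map h₀)) ∈ distinguishedTriangles := by
    refine isomorphic_distinguished _ hd3 _ ?_
    refine Triangle.isoMk _ _ (Iso.refl _) (shiftNegShift E (1 : ℤ)).symm (Iso.refl _)
      ?_ ?_ ?_
    · simp only [Triangle.mk, Triangle.rotate, Iso.refl_hom, Iso.symm_hom, Category.id_comp]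
      rw [Preadditive.neg_comp, Category.assoc, Iso.hom_inv_id, Category.comp_id]
    · simp [Triangle.mk, Triangle.rotate]
    · simp [Triangle.mk, Triangle.rotate]
  refine ⟨A'⟦(1 : ℤ)⟧, B'⟦(1 : ℤ)⟧, _, _, _,
    ht.isoClosed_le (shiftShiftNeg A' (1 : ℤ)).symm hA', hB', ?_, hdT⟩
  intro hLeE
  exact le_ext ht _ (rot_of_distTriang _ hdT) hLeE (ht.shift_le _ (ht.shift_le _ hA'))

lemma trunc₂ (ht : IsTStructure D Le Ge) (E : D) (hE : Ge E) :
    ∃ (W E' : D) (w : W ⟶ E) (g' : E ⟶ E') (h₃ : E' ⟶ W⟦(1 : ℤ)⟧),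
      (Le W ∧ Ge W) ∧ Ge (E'⟦(1 : ℤ)⟧) ∧
        Triangle.mk w g' h₃ ∈ distinguishedTriangles := by
  obtain ⟨W, E', w, g', h₃, hW, hE', hd⟩ := ht.exists_triangle E
  refine ⟨W, E', w, g', h₃, ⟨hW, ?_⟩, hE', hd⟩
  refine charGe₀ ht _ (fun A hA g => ?_)
  have hA1 : Le ((A⟦(1 : ℤ)⟧)⟦(-1 : ℤ)⟧) :=
    ht.isoClosed_le (shiftShiftNeg A (1 : ℤ)).symm hA
  have hkw : ((shiftFunctor D (1 : ℤ)).map g ≫ (shiftNegShift W (1 : ℤ)).hom) ≫ w = 0 :=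
    o2 ht hA1 hE _
  obtain ⟨lam, hlam⟩ := Triangle.coyoneda_exact₁ _ hd
    ((shiftFunctor D (1 : ℤ)).map ((shiftFunctor D (1 : ℤ)).map g ≫ (shiftNegShift W (1 : ℤ)).hom))
    (by erw [show (Triangle.mk w g' h₃).mor₁ = w from rfl, ← Functor.map_comp, hkw,
      Functor.map_zero])
  have hlam0 : lam = 0 := ht.orthogonal (ht.shift_le _ (ht.shift_le _ hA)) hE' _
  have hk0 : (shiftFunctor D (1 : ℤ)).map g ≫ (shiftNegShift W (1 : ℤ)).hom = 0 :=
    shift_cancel (hlam.trans (by subst hlam0; exact zero_comp))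
  refine shift_cancel ?_
  rw [← Category.comp_id ((shiftFunctor D (1 : ℤ)).map g),
    ← Iso.hom_inv_id (shiftNegShift W (1 : ℤ)), ← Category.assoc, hk0, zero_comp]

lemma t_retract (ht : IsTStructure D Le Ge) (htf : HeartTorsionPair Le Ge T F)
    {X t₀ : D} (i : X ⟶ t₀) (r : t₀ ⟶ X) (hir : i ≫ r = 𝟙 X)
    (hTt : T t₀) (hXle : Le X) (hXge : Ge X) : T X := by
  obtain ⟨t', f', u, v, w, hTt', hFf', hd⟩ := htf.exists_triangle X hXle hXge
  have hv : v = 0 := by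
    have h1 : r ≫ v = 0 := htf.orthogonal hTt hFf' _
    rw [show v = i ≫ (r ≫ v) from by rw [← Category.assoc, hir, Category.id_comp],
      h1, comp_zero]
  obtain ⟨s, hs⟩ := Triangle.coyoneda_exact₂ _ hd (𝟙 X) (by
    dsimp [Triangle.mk, Triangle.rotate]; rw [Category.id_comp, hv]; rfl)
  replace hs : 𝟙 X = (show X ⟶ t' from s) ≫ u := hs
  set s₀ : X ⟶ t' := (show X ⟶ t' from s) with hs₀def
  obtain ⟨r', hr'⟩ := Triangle.yoneda_exact₂ _ (rot_of_distTriang _ hd) (𝟙 f') (by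
    dsimp [Triangle.mk, Triangle.rotate]; rw [Category.comp_id, hv]; rfl)
  dsimp [Triangle.mk, Triangle.rotate] at hr'
  have hle : Le (f'⟦(-1 : ℤ)⟧) := by
    refine ht.summands_le
      ((shiftFunctor D (-1 : ℤ)).map w ≫ (shiftShiftNeg t' (1 : ℤ)).hom)
      ((shiftShiftNeg t' (1 : ℤ)).inv ≫ (shiftFunctor D (-1 : ℤ)).map r') ?_
      (htf.mem_heart_t t' hTt').1
    erw [Category.assoc, Iso.hom_inv_id_assoc, ← Functor.map_comp, ← hr', Functor.map_id]
  have hzf : IsZero (f'⟦(-1 : ℤ)⟧) := (IsZero.iff_id_eq_zero _).mpr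
    (ht.orthogonal hle (ht.isoClosed_ge (shiftNegShift f' (1 : ℤ)).symm
      (htf.mem_heart_f f' hFf').2) _)
  have hzf' : IsZero f' := (isZero_shift hzf 1).of_iso (shiftNegShift f' (1 : ℤ)).symm
  have hus : u ≫ s₀ = 𝟙 t' := by
    have hgu : (u ≫ s₀ - 𝟙 t') ≫ u = 0 := by
      rw [Preadditive.sub_comp, Category.assoc, ← hs, Category.comp_id,
        Category.id_comp, sub_self]
    obtain ⟨k, hk⟩ := Triangle.coyoneda_exact₃ _ (rot_of_distTriang _ hd)
      ((shiftFunctor D (1 : ℤ)).map (u ≫ s₀ - 𝟙 t')) (by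
        dsimp [Triangle.mk, Triangle.rotate]; rw [Preadditive.comp_neg, ← Functor.map_comp, hgu, Functor.map_zero,
          neg_zero]; rfl)
    dsimp [Triangle.mk, Triangle.rotate] at hk
    have hk0 : k = 0 := hzf'.eq_of_tgt _ _
    have h0 : u ≫ s₀ - 𝟙 t' = 0 := shift_cancel (by rw [hk, hk0]; exact zero_comp)
    rwa [sub_eq_zero] at h0
  exact htf.isoClosed_t (Iso.mk u s₀ hus hs.symm) hTt'

lemma f_retract (ht : IsTStructure D Le Ge) (htf : HeartTorsionPair Le Ge T F)
    {X f₀ : D} (i : X ⟶ f₀) (r : f₀ ⟶ X) (hir : i ≫ r = 𝟙 X)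
    (hFf : F f₀) (hXle : Le X) (hXge : Ge X) : F X := by
  obtain ⟨t', f', u, v, w, hTt', hFf', hd⟩ := htf.exists_triangle X hXle hXge
  have hu : u = 0 := by
    have h1 : u ≫ i = 0 := htf.orthogonal hTt' hFf _
    rw [show u = (u ≫ i) ≫ r from by rw [Category.assoc, hir, Category.comp_id],
      h1, zero_comp]
  obtain ⟨w', hw'⟩ := Triangle.yoneda_exact₂ _ hd (𝟙 X) (by
    dsimp [Triangle.mk, Triangle.rotate]; rw [Category.comp_id, hu]; rfl)
  replace hw' : 𝟙 X = v ≫ (show f' ⟶ X from w') := hw'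
  set w₀ : f' ⟶ X := (show f' ⟶ X from w') with hw₀def
  obtain ⟨p, hp⟩ := Triangle.coyoneda_exact₂ _
    (rot_of_distTriang _ (rot_of_distTriang _ hd)) (𝟙 (t'⟦(1 : ℤ)⟧)) (by
      dsimp [Triangle.mk, Triangle.rotate]; rw [Category.id_comp, hu, Functor.map_zero, neg_zero]; rfl)
  dsimp [Triangle.mk, Triangle.rotate] at hp
  have hGe : Ge (t'⟦(1 : ℤ)⟧) := ht.summands_ge p w hp.symm (htf.mem_heart_f f' hFf').2
  have hzt : IsZero t' := (IsZero.iff_id_eq_zero _).mpr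
    (ht.orthogonal (htf.mem_heart_t t' hTt').1 hGe _)
  have hwv : w₀ ≫ v = 𝟙 f' := by
    have h2 : v ≫ (w₀ ≫ v - 𝟙 f') = 0 := by
      rw [Preadditive.comp_sub, ← Category.assoc, ← hw', Category.id_comp,
        Category.comp_id, sub_self]
    obtain ⟨ψ, hψ⟩ := Triangle.yoneda_exact₃ _ hd (w₀ ≫ v - 𝟙 f') (by dsimp [Triangle.mk, Triangle.rotate]; exact h2)
    dsimp [Triangle.mk, Triangle.rotate] at hψ
    have hw0 : w = 0 := (isZero_shift hzt 1).eq_of_tgt _ _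
    have h0 : w₀ ≫ v - 𝟙 f' = 0 := by rw [hψ, hw0]; exact zero_comp
    rwa [sub_eq_zero] at h0
  exact htf.isoClosed_f (Iso.mk v w₀ hw'.symm hwv).symm hFf'

omit [HasZeroObject D] [Pretriangulated D] in
lemma cancel_iso_hom {X Y Z : D} (e : Y ≅ Z) {f : X ⟶ Y} (h : f ≫ e.hom = 0) :
    f = 0 := by
  rw [← Category.comp_id f, ← e.hom_inv_id, ← Category.assoc, h, zero_comp]

lemma tiltLe_of_le_neg (ht : IsTStructure D Le Ge) (htf : HeartTorsionPair Le Ge T F)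
    {E : D} (h : Le (E⟦(-1 : ℤ)⟧)) : TiltLe Le Ge T E :=
  ⟨E, 0, 𝟙 E, 0, 0, h,
    ⟨le_of_isZero ht (isZero_zero D), ge_of_isZero ht (isZero_zero D)⟩,
    t_isZero ht htf (isZero_zero D), contractible_distinguished E⟩

lemma tiltLe_of_t (ht : IsTStructure D Le Ge) {B : D}
    (hB : Le B ∧ Ge B) (hTB : T B) : TiltLe Le Ge T B :=
  ⟨0, B, 0, 𝟙 B, 0, le_of_isZero ht (isZero_shift (isZero_zero D) _), hB, hTB,
    contractible_distinguished₁ B⟩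

lemma tiltGe_of_ge (ht : IsTStructure D Le Ge) (htf : HeartTorsionPair Le Ge T F)
    {E : D} (hE : Ge E) : TiltGe Le Ge F E :=
  ⟨0, E, 0, 𝟙 E, 0,
    ⟨le_of_isZero ht (isZero_shift (isZero_zero D) _),
     ge_of_isZero ht (isZero_shift (isZero_zero D) _)⟩,
    f_isZero ht htf (isZero_shift (isZero_zero D) _), hE,
    contractible_distinguished₁ E⟩

lemma tiltGe_of_f (ht : IsTStructure D Le Ge) (htf : HeartTorsionPair Le Ge T F)
    {f₀ : D} (hf : Le f₀ ∧ Ge f₀) (hF : F f₀) : TiltGe Le Ge F (f₀⟦(1 : ℤ)⟧) :=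
  ⟨f₀⟦(1 : ℤ)⟧, 0, 𝟙 _, 0, 0,
    ⟨ht.isoClosed_le (shiftShiftNeg f₀ (1 : ℤ)).symm hf.1,
     ht.isoClosed_ge (shiftShiftNeg f₀ (1 : ℤ)).symm hf.2⟩,
    htf.isoClosed_f (shiftShiftNeg f₀ (1 : ℤ)).symm hF,
    ge_of_isZero ht (isZero_zero D), contractible_distinguished _⟩

lemma tiltLe_le (ht : IsTStructure D Le Ge) {E : D} (hE : TiltLe Le Ge T E) : Le E := by
  obtain ⟨A, B, f, g, h, hA, hB, _, hd⟩ := hE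
  exact le_ext ht _ hd (le_up ht hA) hB.1

lemma tiltGe_ge_shift (ht : IsTStructure D Le Ge) {E : D} (hE : TiltGe Le Ge F E) :
    Ge (E⟦(-1 : ℤ)⟧) := by
  obtain ⟨A, B, f, g, h, hAh, hAF, hB, hd⟩ := hE
  refine charGe₀ ht _ (fun X hX φ => ?_)
  have hk2g : (((shiftFunctor D (1 : ℤ)).map ((shiftFunctor D (1 : ℤ)).map φ ≫
      (shiftNegShift (E⟦(-1 : ℤ)⟧) (1 : ℤ)).hom) ≫ (shiftNegShift E (1 : ℤ)).hom)) ≫ g = 0 :=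
    o2 ht (ht.isoClosed_le (shiftShiftNeg (X⟦(1 : ℤ)⟧) (1 : ℤ)).symm (ht.shift_le _ hX)) hB _
  obtain ⟨k₃, hk₃⟩ := Triangle.coyoneda_exact₂ _ hd _ hk2g
  have hk₃0 : k₃ = 0 := by
    refine o2' ht ?_ hAh.2 k₃
    exact ht.isoClosed_le
      (((shiftFunctor D (-1 : ℤ)).mapIso (shiftShiftNeg (X⟦(1 : ℤ)⟧) (1 : ℤ))).trans
        (shiftShiftNeg X (1 : ℤ))).symm hX
  have h1 : (shiftFunctor D (1 : ℤ)).map ((shiftFunctor D (1 : ℤ)).map φ ≫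
      (shiftNegShift (E⟦(-1 : ℤ)⟧) (1 : ℤ)).hom) ≫ (shiftNegShift E (1 : ℤ)).hom = 0 := by
    exact hk₃.trans (by subst hk₃0; exact zero_comp)
  exact shift_cancel (cancel_iso_hom _ (shift_cancel (cancel_iso_hom _ h1)))

lemma tiltLe_iso {A B : D} (e : A ≅ B) (hA : TiltLe Le Ge T A) : TiltLe Le Ge T B := by
  obtain ⟨P, tA, p, q, hh, h1, h2, h3, hd⟩ := hA
  refine ⟨P, tA, p ≫ e.hom, e.inv ≫ q, hh, h1, h2, h3,
    isomorphic_distinguished _ hd _ ?_⟩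
  exact Triangle.isoMk _ _ (Iso.refl _) e.symm (Iso.refl _) (by dsimp [Triangle.mk, Triangle.rotate]; simp)
    (by dsimp [Triangle.mk, Triangle.rotate]; simp) (by dsimp [Triangle.mk]; simp)

lemma tiltGe_iso {A B : D} (e : A ≅ B) (hA : TiltGe Le Ge F A) : TiltGe Le Ge F B := by
  obtain ⟨A₀, B₀, f, g, h, h1, h2, h3, hd⟩ := hA
  refine ⟨A₀, B₀, f ≫ e.hom, e.inv ≫ g, h, h1, h2, h3,
    isomorphic_distinguished _ hd _ ?_⟩
  exact Triangle.isoMk _ _ (Iso.refl _) e.symm (Iso.refl _) (by dsimp [Triangle.mk, Triangle.rotate]; simp)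
    (by dsimp [Triangle.mk, Triangle.rotate]; simp) (by dsimp [Triangle.mk]; simp)

lemma tilt_orth' (ht : IsTStructure D Le Ge) (htf : HeartTorsionPair Le Ge T F)
    {A B : D} (hA : TiltLe Le Ge T A) (hB : TiltGe Le Ge F B)
    (φ : A⟦(1 : ℤ)⟧ ⟶ B) : φ = 0 := by
  have hLeA : Le A := tiltLe_le ht hA
  obtain ⟨P, tA, p, q, hh, hP, htAh, htA, hdA⟩ := hA
  obtain ⟨A₀, B₀, f₀, g₀, h₀, hA₀h, hA₀F, hB₀, hdB⟩ := hB
  have h1 : φ ≫ g₀ = 0 :=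
    o2 ht (ht.isoClosed_le (shiftShiftNeg A (1 : ℤ)).symm hLeA) hB₀ _
  obtain ⟨ψ₁, hψ₁⟩ := Triangle.coyoneda_exact₂ _ hdB φ h1
  have hd3 := rot_of_distTriang _ (rot_of_distTriang _ (rot_of_distTriang _ hdA))
  have hp1 : (shiftFunctor D (1 : ℤ)).map p ≫ ψ₁ = 0 := by
    refine o2' ht ?_ hA₀h.2 _
    exact ht.isoClosed_le
      ((shiftFunctor D (-1 : ℤ)).mapIso (shiftShiftNeg P (1 : ℤ))).symm hP
  obtain ⟨χ, hχ⟩ := Triangle.yoneda_exact₂ _ hd3 ψ₁ (by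
    dsimp [Triangle.mk, Triangle.rotate]; erw [Preadditive.neg_comp, hp1, neg_zero]; rfl)
  dsimp [Triangle.mk, Triangle.rotate] at hχ
  have hχeq : ψ₁ = (-(shiftFunctor D (1 : ℤ)).map q) ≫
      (show tA⟦(1 : ℤ)⟧ ⟶ A₀ from χ) := hχ
  have hχ0 : (show tA⟦(1 : ℤ)⟧ ⟶ A₀ from χ) = 0 := by
    have ht0 : (shiftShiftNeg tA (1 : ℤ)).inv ≫
        (shiftFunctor D (-1 : ℤ)).map (show tA⟦(1 : ℤ)⟧ ⟶ A₀ from χ) = 0 :=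
      htf.orthogonal htA hA₀F _
    have h2 : (shiftFunctor D (-1 : ℤ)).map (show tA⟦(1 : ℤ)⟧ ⟶ A₀ from χ) = 0 := by
      rw [← Category.id_comp
          ((shiftFunctor D (-1 : ℤ)).map (show tA⟦(1 : ℤ)⟧ ⟶ A₀ from χ)),
        ← Iso.hom_inv_id (shiftShiftNeg tA (1 : ℤ)), Category.assoc, ht0, comp_zero]
    exact (shiftFunctor D (-1 : ℤ)).map_injective (by rw [h2, Functor.map_zero])
  erw [hψ₁, hχeq, hχ0, comp_zero, zero_comp]; rfl

lemma tilt_orth (ht : IsTStructure D Le Ge) (htf : HeartTorsionPair Le Ge T F)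
    {A B : D} (hA : TiltLe Le Ge T A) (hB : TiltGe Le Ge F (B⟦(1 : ℤ)⟧))
    (φ : A ⟶ B) : φ = 0 :=
  shift_cancel (tilt_orth' ht htf hA hB ((shiftFunctor D (1 : ℤ)).map φ))

lemma tilt_charLe (ht : IsTStructure D Le Ge) (htf : HeartTorsionPair Le Ge T F) (E : D)
    (h : ∀ B, TiltGe Le Ge F (B⟦(1 : ℤ)⟧) → ∀ f : E ⟶ B, f = 0) : TiltLe Le Ge T E := by
  have hLeE : Le E := charLe ht _ (fun B hB f => h B (tiltGe_of_ge ht htf hB) f)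
  obtain ⟨P, Q, p, q, hq, hP, hQge, hQle, hd⟩ := truncA ht E
  have hQle' : Le Q := hQle hLeE
  obtain ⟨t, f, u, v, df, hTt, hFf, hdt⟩ := htf.exists_triangle Q hQle' hQge
  have hqv : q ≫ v = 0 := h f (tiltGe_of_f ht htf (htf.mem_heart_f f hFf) hFf) _
  obtain ⟨ρ, hρ⟩ := Triangle.yoneda_exact₃ _ hd v (by dsimp [Triangle.mk, Triangle.rotate]; exact hqv)
  have hρ0 : ρ = 0 :=
    o2 ht (ht.isoClosed_le (shiftShiftNeg P (1 : ℤ)).symm (le_up ht hP))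
      (htf.mem_heart_f f hFf).2 _
  have hv : v = 0 := by rw [hρ, hρ0, comp_zero]; rfl
  obtain ⟨s, hs⟩ := Triangle.coyoneda_exact₂ _ hdt (𝟙 Q) (by
    dsimp [Triangle.mk, Triangle.rotate]; rw [Category.id_comp, hv]; rfl)
  replace hs : 𝟙 Q = (show Q ⟶ t from s) ≫ u := hs
  have hTQ : T Q := t_retract ht htf _ u hs.symm hTt hQle' hQge
  exact ⟨P, Q, p, q, hq, hP, ⟨hQle', hQge⟩, hTQ, hd⟩

lemma tilt_charGe (ht : IsTStructure D Le Ge) (htf : HeartTorsionPair Le Ge T F) (E : D)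
    (h : ∀ A, TiltLe Le Ge T A → ∀ f : A ⟶ E, f = 0) : TiltGe Le Ge F (E⟦(1 : ℤ)⟧) := by
  have hGeE : Ge E := charGe₀ ht _ (fun A hA g => by
    have hk : (shiftFunctor D (1 : ℤ)).map g ≫ (shiftNegShift E (1 : ℤ)).hom = 0 :=
      h _ (tiltLe_of_le_neg ht htf (ht.isoClosed_le (shiftShiftNeg A (1 : ℤ)).symm hA)) _
    exact shift_cancel (cancel_iso_hom _ hk))
  obtain ⟨W, E', w, g', h₃, hWh, hE'1, hd₃⟩ := trunc₂ ht E hGeE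
  obtain ⟨t, f, u, v, df, hTt, hFf, hd₄⟩ := htf.exists_triangle W hWh.1 hWh.2
  have huw : u ≫ w = 0 := h _ (tiltLe_of_t ht (htf.mem_heart_t t hTt) hTt) _
  obtain ⟨lam, hlam⟩ := Triangle.coyoneda_exact₁ _ hd₃ ((shiftFunctor D (1 : ℤ)).map u)
    (by erw [show (Triangle.mk w g' h₃).mor₁ = w from rfl, ← Functor.map_comp, huw,
      Functor.map_zero])
  have hlam0 : lam = 0 :=
    ht.orthogonal (ht.shift_le _ (htf.mem_heart_t t hTt).1) hE'1 _
  have hu : u = 0 := shift_cancel (hlam.trans (by subst hlam0; exact zero_comp))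
  obtain ⟨rr, hrr⟩ := Triangle.yoneda_exact₂ _ hd₄ (𝟙 W) (by
    dsimp [Triangle.mk, Triangle.rotate]; rw [Category.comp_id, hu]; rfl)
  replace hrr : 𝟙 W = v ≫ (show f ⟶ W from rr) := hrr
  have hFW : F W := f_retract ht htf v _ hrr.symm hFf hWh.1 hWh.2
  have hd3 := rot_of_distTriang _ (rot_of_distTriang _ (rot_of_distTriang _ hd₃))
  exact ⟨W⟦(1 : ℤ)⟧, E'⟦(1 : ℤ)⟧, -((shiftFunctor D (1 : ℤ)).map w),
    -((shiftFunctor D (1 : ℤ)).map g'), -((shiftFunctor D (1 : ℤ)).map h₃),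
    ⟨ht.isoClosed_le (shiftShiftNeg W (1 : ℤ)).symm hWh.1,
     ht.isoClosed_ge (shiftShiftNeg W (1 : ℤ)).symm hWh.2⟩,
    htf.isoClosed_f (shiftShiftNeg W (1 : ℤ)).symm hFW, hE'1, hd3⟩

lemma tiltGe_down (ht : IsTStructure D Le Ge) (htf : HeartTorsionPair Le Ge T F)
    {Q : D} (hQ : TiltGe Le Ge F (Q⟦(1 : ℤ)⟧)) : TiltGe Le Ge F Q :=
  tiltGe_of_ge ht htf (ht.isoClosed_ge (shiftShiftNeg Q (1 : ℤ)) (tiltGe_ge_shift ht hQ))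

lemma tilt_shift_le (ht : IsTStructure D Le Ge) (htf : HeartTorsionPair Le Ge T F)
    {A : D} (hA : TiltLe Le Ge T A) : TiltLe Le Ge T (A⟦(1 : ℤ)⟧) :=
  tilt_charLe ht htf _ (fun B hB f => tilt_orth' ht htf hA (tiltGe_down ht htf hB) f)

lemma tilt_shift_ge (ht : IsTStructure D Le Ge) (htf : HeartTorsionPair Le Ge T F)
    {A : D} (hA : TiltGe Le Ge F A) : TiltGe Le Ge F (A⟦(-1 : ℤ)⟧) := by
  refine tiltGe_iso (shiftNegShift (A⟦(-1 : ℤ)⟧) (1 : ℤ))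
    (tilt_charGe ht htf _ (fun A₀ hA₀ g => ?_))
  have h1 : (shiftFunctor D (1 : ℤ)).map ((shiftFunctor D (1 : ℤ)).map g ≫
      (shiftNegShift (A⟦(-1 : ℤ)⟧) (1 : ℤ)).hom) ≫ (shiftNegShift A (1 : ℤ)).hom = 0 :=
    tilt_orth' ht htf (tilt_shift_le ht htf hA₀) hA _
  exact shift_cancel (cancel_iso_hom _ (shift_cancel (cancel_iso_hom _ h1)))

lemma tilt_summands_le (ht : IsTStructure D Le Ge) (htf : HeartTorsionPair Le Ge T F)
    {A B : D} (i : A ⟶ B) (r : B ⟶ A) (hir : i ≫ r = 𝟙 A)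
    (hB : TiltLe Le Ge T B) : TiltLe Le Ge T A :=
  tilt_charLe ht htf _ (fun Q hQ f => by
    rw [show f = i ≫ (r ≫ f) from by rw [← Category.assoc, hir, Category.id_comp],
      tilt_orth ht htf hB hQ (r ≫ f), comp_zero])

lemma tilt_summands_ge (ht : IsTStructure D Le Ge) (htf : HeartTorsionPair Le Ge T F)
    {A B : D} (i : A ⟶ B) (r : B ⟶ A) (hir : i ≫ r = 𝟙 A)
    (hB : TiltGe Le Ge F B) : TiltGe Le Ge F A := by
  refine tiltGe_iso (shiftNegShift A (1 : ℤ))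
    (tilt_charGe ht htf _ (fun A₀ hA₀ g => ?_))
  have h1 : g ≫ (shiftFunctor D (-1 : ℤ)).map i = 0 :=
    tilt_orth ht htf hA₀ (tiltGe_iso (shiftNegShift B (1 : ℤ)).symm hB) _
  rw [show g = (g ≫ (shiftFunctor D (-1 : ℤ)).map i) ≫ (shiftFunctor D (-1 : ℤ)).map r
      from by rw [Category.assoc, ← Functor.map_comp, hir, Functor.map_id,
        Category.comp_id], h1, zero_comp]

lemma tilt_exists (ht : IsTStructure D Le Ge) (htf : HeartTorsionPair Le Ge T F) (Z : D) :
    ∃ (A B : D) (f : A ⟶ Z) (g : Z ⟶ B) (h : B ⟶ A⟦(1 : ℤ)⟧),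
      TiltLe Le Ge T A ∧ TiltGe Le Ge F (B⟦(1 : ℤ)⟧) ∧
        Triangle.mk f g h ∈ distinguishedTriangles := by
  obtain ⟨U, V, a', b', dV, hU, hVge, -, hdUV⟩ := truncA ht Z
  obtain ⟨W, V', w, g', h₃, hWh, hV'1, hd₃⟩ := trunc₂ ht V hVge
  obtain ⟨t, f, u, v, df, hTt, hFf, hd₄⟩ := htf.exists_triangle W hWh.1 hWh.2
  obtain ⟨C, c, δ, hdC⟩ := distinguished_cocone_triangle (u ≫ w)
  obtain ⟨Atld, α, θ, hd₀⟩ := distinguished_cocone_triangle₁ (b' ≫ c)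
  have hC : ∀ A₁, TiltLe Le Ge T A₁ → ∀ φ : A₁ ⟶ C, φ = 0 := by
    intro A₁ hA₁ φ
    have hLeA₁ : Le A₁ := tiltLe_le ht hA₁
    have h31 : δ ≫ (shiftFunctor D (1 : ℤ)).map (u ≫ w) = 0 :=
      comp_distTriang_mor_zero₃₁ _ hdC
    have hεm : (φ ≫ δ) ≫ (shiftFunctor D (1 : ℤ)).map (u ≫ w) = 0 := by
      rw [Category.assoc, h31, comp_zero]
    have hεu : (φ ≫ δ) ≫ (shiftFunctor D (1 : ℤ)).map u = 0 := by
      obtain ⟨κ, hκ⟩ := Triangle.coyoneda_exact₁ _ hd₃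
        ((φ ≫ δ) ≫ (shiftFunctor D (1 : ℤ)).map u) (by
          erw [show (Triangle.mk w g' h₃).mor₁ = w from rfl, Category.assoc,
            ← Functor.map_comp]
          exact hεm)
      have hκ0 : κ = 0 := ht.orthogonal hLeA₁ hV'1 _
      erw [hκ, hκ0, zero_comp]; rfl
    have hε : φ ≫ δ = 0 := by
      obtain ⟨σ, hσ⟩ := Triangle.coyoneda_exact₁ _ hd₄ (φ ≫ δ) (by
        rw [show (Triangle.mk u v df).mor₁ = u from rfl]; exact hεu)
      have hσ0 : σ = 0 :=
        tilt_orth ht htf hA₁ (tiltGe_of_f ht htf (htf.mem_heart_f f hFf) hFf) _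
      erw [hσ, hσ0, zero_comp]; rfl
    obtain ⟨β, hβ⟩ := Triangle.coyoneda_exact₃ _ hdC φ (by dsimp [Triangle.mk, Triangle.rotate]; exact hε)
    have hβg : β ≫ g' = 0 := ht.orthogonal hLeA₁ hV'1 _
    obtain ⟨γ, hγ⟩ := Triangle.coyoneda_exact₂ _ hd₃ (show A₁ ⟶ V from β) hβg
    replace hγ : β = γ ≫ w := hγ
    have hγv : γ ≫ v = 0 :=
      tilt_orth ht htf hA₁ (tiltGe_of_f ht htf (htf.mem_heart_f f hFf) hFf) _
    obtain ⟨γ', hγ'⟩ := Triangle.coyoneda_exact₂ _ hd₄ (show A₁ ⟶ W from γ) hγv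
    replace hγ' : γ = γ' ≫ u := hγ'
    have hmc : u ≫ (w ≫ c) = 0 := by
      have h12 : (u ≫ w) ≫ c = 0 := comp_distTriang_mor_zero₁₂ _ hdC
      rw [← Category.assoc]; exact h12
    erw [hβ, show (Triangle.mk (u ≫ w) c δ).mor₂ = c from rfl, hγ, hγ',
      Category.assoc, Category.assoc, hmc, comp_zero]; rfl
  have hAtld : ∀ B₁, TiltGe Le Ge F (B₁⟦(1 : ℤ)⟧) → ∀ ξ : Atld ⟶ B₁, ξ = 0 := by
    intro B₁ hB₁ ξ
    have c1 : ∀ g : t ⟶ B₁, g = 0 := fun g =>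
      tilt_orth ht htf (tiltLe_of_t ht (htf.mem_heart_t t hTt) hTt) hB₁ g
    have c2 : ∀ g : U ⟶ B₁, g = 0 := fun g =>
      tilt_orth ht htf (tiltLe_of_le_neg ht htf hU) hB₁ g
    have hζθ : (b' ≫ c) ≫ θ = 0 := comp_distTriang_mor_zero₂₃ _ hd₀
    have hσ₂ : c ≫ (θ ≫ (shiftFunctor D (1 : ℤ)).map ξ) = 0 := by
      obtain ⟨τ₂, hτ₂⟩ := Triangle.yoneda_exact₃ _ hdUV
        (c ≫ (θ ≫ (shiftFunctor D (1 : ℤ)).map ξ)) (by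
          erw [show (Triangle.mk a' b' dV).mor₂ = b' from rfl, ← Category.assoc,
            ← Category.assoc, hζθ, zero_comp])
      have hτ₂0 : τ₂ = 0 := shift_hom_zero c2 τ₂
      erw [hτ₂, hτ₂0, comp_zero]; rfl
    have hσ : θ ≫ (shiftFunctor D (1 : ℤ)).map ξ = 0 := by
      obtain ⟨τ, hτ⟩ := Triangle.yoneda_exact₃ _ hdC
        (θ ≫ (shiftFunctor D (1 : ℤ)).map ξ) (by
          rw [show (Triangle.mk (u ≫ w) c δ).mor₂ = c from rfl]; exact hσ₂)
      have hτ0 : τ = 0 := shift_hom_zero c1 τ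
      erw [hτ, hτ0, comp_zero]; rfl
    obtain ⟨h₂', hh₂'⟩ := Triangle.yoneda_exact₂ _
      (rot_of_distTriang _ (rot_of_distTriang _ hd₀))
      ((shiftFunctor D (1 : ℤ)).map ξ) (by dsimp [Triangle.mk, Triangle.rotate]; exact hσ)
    dsimp [Triangle.mk, Triangle.rotate] at hh₂'
    obtain ⟨h₀', hh₀'⟩ := (shiftFunctor D (1 : ℤ)).map_surjective
      (show Z⟦(1 : ℤ)⟧ ⟶ B₁⟦(1 : ℤ)⟧ from h₂')
    replace hh₀' : (shiftFunctor D (1 : ℤ)).map h₀' = h₂' := hh₀'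
    have hαh : α ≫ h₀' = 0 := by
      obtain ⟨h₁', hh₁'⟩ := Triangle.yoneda_exact₂ _ hdUV h₀' (by
        rw [show (Triangle.mk a' b' dV).mor₁ = a' from rfl]; exact c2 _)
      have hm1 : (u ≫ w) ≫ (show V ⟶ B₁ from h₁') = 0 := c1 _
      obtain ⟨h₂'', hh₂''⟩ := Triangle.yoneda_exact₂ _ hdC (show V ⟶ B₁ from h₁') hm1
      replace hh₂'' : h₁' = c ≫ h₂'' := hh₂''
      rw [hh₁', show (Triangle.mk a' b' dV).mor₂ = b' from rfl, hh₂'']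
      have h12 : (α ≫ (b' ≫ c)) = 0 := comp_distTriang_mor_zero₁₂ _ hd₀
      rw [← Category.assoc] at h12
      erw [← Category.assoc, ← Category.assoc, h12, zero_comp]
    refine shift_cancel ?_
    erw [hh₂', ← hh₀', Preadditive.neg_comp, ← Functor.map_comp, hαh, Functor.map_zero,
      neg_zero]
  exact ⟨Atld, C, α, b' ≫ c, θ, tilt_charLe ht htf Atld hAtld, tilt_charGe ht htf C hC, hd₀⟩

end HRS
end CategoryTheory


open Glueing CategoryTheory Limits Pretriangulated in
/-- Happel–Reiten–Smalø tilt: if `(Le, Ge)` is a bounded t-structure on `D` with heart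
`A` and `(T, F)` is a torsion pair in `A`, then the HRS-tilt `(D̃^{≤0}, D̃^{≥0})` is a
t-structure on `D` and satisfies `D^{≤-1} ⊆ D̃^{≤0} ⊆ D^{≤0}`. -/
theorem hrs_tilt_tStructure
    {D : Type*} [Category D] [HasZeroObject D] [Preadditive D] [HasShift D ℤ]
    [∀ n : ℤ, (shiftFunctor D n).Additive] [Pretriangulated D]
    {Le Ge : D → Prop} (ht : IsTStructure D Le Ge)
    (hbounded : ∀ Z : D, (∃ n : ℤ, Le (Z⟦n⟧)) ∧ (∃ n : ℤ, Ge (Z⟦n⟧)))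
    {T F : D → Prop} (htf : HeartTorsionPair Le Ge T F) :
    IsTStructure D (TiltLe Le Ge T) (TiltGe Le Ge F) ∧
      (∀ E : D, Le (E⟦(-1 : ℤ)⟧) → TiltLe Le Ge T E) ∧
      (∀ E : D, TiltLe Le Ge T E → Le E) := by
  refine ⟨?_, fun E h => CategoryTheory.HRS.tiltLe_of_le_neg ht htf h,
    fun E h => CategoryTheory.HRS.tiltLe_le ht h⟩
  exact
    { isoClosed_le := fun e h => CategoryTheory.HRS.tiltLe_iso e h
      isoClosed_ge := fun e h => CategoryTheory.HRS.tiltGe_iso e h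
      summands_le := fun i r hir h => CategoryTheory.HRS.tilt_summands_le ht htf i r hir h
      summands_ge := fun i r hir h => CategoryTheory.HRS.tilt_summands_ge ht htf i r hir h
      shift_le := fun A h => CategoryTheory.HRS.tilt_shift_le ht htf h
      shift_ge := fun A h => CategoryTheory.HRS.tilt_shift_ge ht htf h
      orthogonal := fun hA hB f => CategoryTheory.HRS.tilt_orth ht htf hA hB f
      exists_triangle := CategoryTheory.HRS.tilt_exists ht htf }
end

section
/- Let D be a triangulated category with a recollement by Y and X such that the t-structure (D^{≤0}, D^{≥0}) is glued from t-structures on Y and X, and let (T, F) be a torsion pair in the heart A_D. Then the HRS-tilt (D̃^{≤0}, D̃^{≥0}) of (D^{≤0}, D^{≥0}) with respect to (T, F) satisfies j_!j^*(D̃^{≤0}) ⊆ D̃^{≤0} (equivalently, is glued with respect to the recollement) if and only if (T, F) is compatible with the induced recollement of hearts, i.e. ᵖj_!ᵖj^*(T) ⊆ T. -/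
open CategoryTheory Limits Pretriangulated

section HRSAux

namespace HRSAux

open CategoryTheory Limits Pretriangulated Category

variable {C : Type*} [Category C] [HasZeroObject C] [Preadditive C] [HasShift C ℤ]
  [∀ n : ℤ, (shiftFunctor C n).Additive] [Pretriangulated C]

lemma le_of_isZero {Le Ge : C → Prop} (t : Glueing.IsTStructure C Le Ge) {Z : C}
    (hZ : IsZero Z) : Le Z := by
  obtain ⟨A, B, f, g, h, hA, hB, hT⟩ := t.exists_triangle Z
  exact t.summands_le (0 : Z ⟶ A) 0 (hZ.eq_of_src _ _) hA

lemma orth' {Le Ge : C → Prop} (t : Glueing.IsTStructure C Le Ge) {A B : C}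
    (hA : Le (A⟦(-1 : ℤ)⟧)) (hB : Ge B) (f : A ⟶ B) : f = 0 := by
  have hge : Ge ((B⟦(-1 : ℤ)⟧)⟦(1 : ℤ)⟧) :=
    t.isoClosed_ge ((shiftFunctorCompIsoId C (-1 : ℤ) (1 : ℤ) (by omega)).app B).symm hB
  have h0 : (shiftFunctor C (-1 : ℤ)).map f = 0 := t.orthogonal hA hge _
  exact ((shiftFunctor C (-1 : ℤ)).map_eq_zero_iff).1 h0

lemma ge_of_orth {Le Ge : C → Prop} (t : Glueing.IsTStructure C Le Ge) {Z : C}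
    (H : ∀ A : C, Le (A⟦(-1 : ℤ)⟧) → ∀ f : A ⟶ Z, f = 0) : Ge Z := by
  obtain ⟨A₀, B₀, f₀, g₀, h₀, hA₀, hB₀, hT₀⟩ := t.exists_triangle (Z⟦(-1 : ℤ)⟧)
  set e := (shiftFunctorCompIsoId C (-1 : ℤ) (1 : ℤ) (by omega)).app Z with he
  have hf₀ : f₀ = 0 := by
    have hle : Le ((A₀⟦(1 : ℤ)⟧)⟦(-1 : ℤ)⟧) :=
      t.isoClosed_le ((shiftFunctorCompIsoId C (1 : ℤ) (-1 : ℤ) (by omega)).app A₀).symm hA₀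
    have h1 : (shiftFunctor C (1 : ℤ)).map f₀ ≫ e.hom = 0 := H _ hle _
    have h2 : (shiftFunctor C (1 : ℤ)).map f₀ = 0 := by
      rw [← cancel_mono e.hom, h1, zero_comp]
    exact ((shiftFunctor C (1 : ℤ)).map_eq_zero_iff).1 h2
  obtain ⟨r, hr⟩ : ∃ r : B₀ ⟶ Z⟦(-1 : ℤ)⟧, 𝟙 (Z⟦(-1 : ℤ)⟧) = g₀ ≫ r :=
    Triangle.yoneda_exact₂ _ hT₀ (𝟙 (Z⟦(-1 : ℤ)⟧))
    (by change f₀ ≫ _ = 0; rw [hf₀, zero_comp])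
  refine t.summands_ge (e.inv ≫ (shiftFunctor C (1 : ℤ)).map g₀)
    ((shiftFunctor C (1 : ℤ)).map r ≫ e.hom) ?_ hB₀
  have hgr : g₀ ≫ r = 𝟙 (Z⟦(-1 : ℤ)⟧) := hr.symm
  rw [assoc, ← Functor.map_comp_assoc, hgr]
  simp

lemma ext_ge {Le Ge : C → Prop} (t : Glueing.IsTStructure C Le Ge) (T : Triangle C)
    (hT : T ∈ distTriang C) (h₁ : Ge T.obj₁) (h₃ : Ge T.obj₃) : Ge T.obj₂ := by
  refine ge_of_orth t (fun A hA f => ?_)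
  obtain ⟨k, hk⟩ := Triangle.coyoneda_exact₂ T hT f (orth' t hA h₃ _)
  rw [hk, orth' t hA h₁ k, zero_comp]

end HRSAux

section RecAux

open CategoryTheory Limits Pretriangulated Glueing

variable {D Y X : Type*} [Category D] [HasZeroObject D] [Preadditive D] [HasShift D ℤ]
  [∀ n : ℤ, (shiftFunctor D n).Additive] [Pretriangulated D]
  [Category Y] [HasZeroObject Y] [Preadditive Y] [HasShift Y ℤ]
  [∀ n : ℤ, (shiftFunctor Y n).Additive] [Pretriangulated Y]
  [Category X] [HasZeroObject X] [Preadditive X] [HasShift X ℤ]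
  [∀ n : ℤ, (shiftFunctor X n).Additive] [Pretriangulated X]

lemma HRSAux.isZero_iStar_jLower (R : Recollement D Y X) (Cx : X) :
    IsZero (R.iStar.obj (R.jLower.obj Cx)) := by
  letI := R.jLower_full
  letI := R.jLower_faithful
  letI := R.iLower_full
  letI := R.iLower_faithful
  letI : R.iLower.CommShift ℤ := R.commShift_iLower
  letI : R.iLower.IsTriangulated := R.isTriangulated_iLower
  obtain ⟨δ, hδ⟩ := R.triangle₂ (R.jLower.obj Cx)
  have h3 : IsZero (R.iLower.obj (R.iStar.obj (R.jLower.obj Cx))) :=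
    Triangle.isZero₃_of_isIso₁ _ hδ (by
      have : IsIso (R.adj_j₁.counit.app (R.jLower.obj Cx)) := inferInstance
      exact this)
  rw [IsZero.iff_id_eq_zero] at h3 ⊢
  apply R.iLower.map_injective
  rw [CategoryTheory.Functor.map_id, CategoryTheory.Functor.map_zero]
  exact h3

open ZeroObject in
lemma HRSAux.exists_zero_triangle {C : Type*} [Category C] [HasZeroObject C] [Preadditive C]
    [HasShift C ℤ] [∀ n : ℤ, (shiftFunctor C n).Additive] [Pretriangulated C] (A : C) :
    ∃ (O : C) (f : O ⟶ A) (h : A ⟶ O⟦(1 : ℤ)⟧),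
      IsZero O ∧ Triangle.mk f (𝟙 A) h ∈ distTriang C :=
  ⟨0, 0, 0, isZero_zero C, contractible_distinguished₁ A⟩

end RecAux


open Glueing CategoryTheory Limits Pretriangulated in
/-- Let `(D^{≤0}, D^{≥0})` be the t-structure glued from t-structures on `Y` and `X`
along a recollement, and `(T, F)` a torsion pair in its heart. Then the HRS-tilt
`(D̃^{≤0}, D̃^{≥0})` satisfies `j_!j^*(D̃^{≤0}) ⊆ D̃^{≤0}` (i.e. it is glued with
respect to the recollement) if and only if `(T, F)` is compatible with the induced
recollement of hearts, i.e. `ᵖj_!ᵖj^*(T) ⊆ T` (for `A ∈ T`, the zeroth cohomology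
`H^0(j_!j^*A) = ᵖj_!ᵖj^*A` lies in `T`). -/
theorem hrs_tilt_glued_iff_compatible
    {D Y X : Type*} [Category D] [HasZeroObject D] [Preadditive D] [HasShift D ℤ]
    [∀ n : ℤ, (shiftFunctor D n).Additive] [Pretriangulated D]
    [Category Y] [HasZeroObject Y] [Preadditive Y] [HasShift Y ℤ]
    [∀ n : ℤ, (shiftFunctor Y n).Additive] [Pretriangulated Y]
    [Category X] [HasZeroObject X] [Preadditive X] [HasShift X ℤ]
    [∀ n : ℤ, (shiftFunctor X n).Additive] [Pretriangulated X]
    (R : Recollement D Y X)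
    {XLe XGe : X → Prop} {YLe YGe : Y → Prop}
    (hX : IsTStructure X XLe XGe) (hY : IsTStructure Y YLe YGe)
    (hXbounded : ∀ Z : X, (∃ n : ℤ, XLe (Z⟦n⟧)) ∧ (∃ n : ℤ, XGe (Z⟦n⟧)))
    (hYbounded : ∀ Z : Y, (∃ n : ℤ, YLe (Z⟦n⟧)) ∧ (∃ n : ℤ, YGe (Z⟦n⟧)))
    {T F : D → Prop}
    (htf : HeartTorsionPair (fun Z => XLe (R.jStar.obj Z) ∧ YLe (R.iStar.obj Z))
      (fun Z => XGe (R.jStar.obj Z) ∧ YGe (R.iShriek.obj Z)) T F) :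
    (∀ E : D,
        TiltLe (fun Z => XLe (R.jStar.obj Z) ∧ YLe (R.iStar.obj Z))
          (fun Z => XGe (R.jStar.obj Z) ∧ YGe (R.iShriek.obj Z)) T E →
        TiltLe (fun Z => XLe (R.jStar.obj Z) ∧ YLe (R.iStar.obj Z))
          (fun Z => XGe (R.jStar.obj Z) ∧ YGe (R.iShriek.obj Z)) T
          (R.jLower.obj (R.jStar.obj E))) ↔
      (∀ A : D, T A →
        ∃ (W B : D) (f : W ⟶ R.jLower.obj (R.jStar.obj A))
          (g : R.jLower.obj (R.jStar.obj A) ⟶ B) (h : B ⟶ W⟦(1 : ℤ)⟧),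
          (XLe (R.jStar.obj (W⟦(-1 : ℤ)⟧)) ∧ YLe (R.iStar.obj (W⟦(-1 : ℤ)⟧))) ∧
          T B ∧ Triangle.mk f g h ∈ distinguishedTriangles) := by
  letI : R.jStar.CommShift ℤ := R.commShift_jStar
  letI : R.jLower.CommShift ℤ := R.commShift_jLower
  letI : R.iStar.CommShift ℤ := R.commShift_iStar
  letI : R.jStar.IsTriangulated := R.isTriangulated_jStar
  letI : R.jLower.IsTriangulated := R.isTriangulated_jLower
  letI : R.iStar.IsTriangulated := R.isTriangulated_iStar
  letI := R.jLower_full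
  letI := R.jLower_faithful
  constructor
  · -- forward direction
    intro hglued A hAT
    have hAheart := htf.mem_heart_t A hAT
    obtain ⟨O, f0, h0, hO, hdist0⟩ := HRSAux.exists_zero_triangle A
    have hz : IsZero (O⟦(-1 : ℤ)⟧) := (shiftFunctor D (-1 : ℤ)).map_isZero hO
    have hTiltA : TiltLe (fun Z => XLe (R.jStar.obj Z) ∧ YLe (R.iStar.obj Z))
        (fun Z => XGe (R.jStar.obj Z) ∧ YGe (R.iShriek.obj Z)) T A :=
      ⟨O, A, f0, 𝟙 A, h0,
        ⟨HRSAux.le_of_isZero hX (R.jStar.map_isZero hz),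
         HRSAux.le_of_isZero hY (R.iStar.map_isZero hz)⟩,
        hAheart, hAT, hdist0⟩
    obtain ⟨W, B'', f', g', h', hW', hB''h, hB''T, hd⟩ := hglued A hTiltA
    exact ⟨W, B'', f', g', h', hW', hB''T, hd⟩
  · -- backward direction
    intro hcompat E hE
    obtain ⟨A, B, f, g, h, hA, hBheart, hBT, hdist⟩ := hE
    have hdistTX : R.jStar.mapTriangle.obj (Triangle.mk f g h) ∈ distTriang X :=
      R.jStar.map_distinguished _ hdist
    have hdistTG : R.jLower.mapTriangle.obj (R.jStar.mapTriangle.obj (Triangle.mk f g h)) ∈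
        distTriang D := R.jLower.map_distinguished _ hdistTX
    obtain ⟨W, B', w, v, ε, hW, hB'T, hdistW⟩ := hcompat B hBT
    obtain ⟨Z, eZ, dZ, hdistC⟩ := distinguished_cocone_triangle
      ((R.jLower.mapTriangle.obj (R.jStar.mapTriangle.obj (Triangle.mk f g h))).mor₂ ≫ v)
    have hB'heart := htf.mem_heart_t B' hB'T
    -- `j^* W` is a zero object
    have hdistTWx : R.jStar.mapTriangle.obj (Triangle.mk w v ε) ∈ distTriang X :=
      R.jStar.map_distinguished _ hdistW
    have hNge : XGe (R.jStar.obj W) := by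
      refine HRSAux.ext_ge hX (R.jStar.mapTriangle.obj (Triangle.mk w v ε)).invRotate
        (inv_rot_of_distTriang _ hdistTWx) ?_ ?_
      · exact hX.shift_ge _ hB'heart.2.1
      · have : IsIso (R.adj_j₁.unit.app (R.jStar.obj B)) := inferInstance
        exact hX.isoClosed_ge (@asIso _ _ _ _ _ this) hBheart.2.1
    have hNle : XLe ((R.jStar.obj W)⟦(-1 : ℤ)⟧) :=
      hX.isoClosed_le ((R.jStar.commShiftIso (-1 : ℤ)).app W) hW.1
    have hNzero : IsZero (R.jStar.obj W) := by
      have hid : 𝟙 ((R.jStar.obj W)⟦(-1 : ℤ)⟧) = 0 :=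
        hX.orthogonal hNle (hX.isoClosed_ge
          ((shiftFunctorCompIsoId X (-1 : ℤ) (1 : ℤ) (by omega)).app
            (R.jStar.obj W)).symm hNge) _
      have h0 : IsZero ((R.jStar.obj W)⟦(-1 : ℤ)⟧) := by
        rw [IsZero.iff_id_eq_zero]; exact hid
      exact IsZero.of_iso ((shiftFunctor X (1 : ℤ)).map_isZero h0)
        ((shiftFunctorCompIsoId X (-1 : ℤ) (1 : ℤ) (by omega)).app (R.jStar.obj W)).symm
    have hIsoV : IsIso (R.jStar.map v) :=
      (Triangle.isZero₁_iff_isIso₂ _ hdistTWx).1 hNzero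
    -- comparison of triangles after applying `j^*`
    have hdistT₁ : (R.jStar.mapTriangle.obj (R.jLower.mapTriangle.obj
        (R.jStar.mapTriangle.obj (Triangle.mk f g h)))).rotate ∈ distTriang X :=
      rot_of_distTriang _ (R.jStar.map_distinguished _ hdistTG)
    have hdistT₂j : R.jStar.mapTriangle.obj (Triangle.mk
        ((R.jLower.mapTriangle.obj (R.jStar.mapTriangle.obj (Triangle.mk f g h))).mor₂ ≫ v)
        eZ dZ) ∈ distTriang X := R.jStar.map_distinguished _ hdistC
    have comm : (R.jStar.mapTriangle.obj (R.jLower.mapTriangle.obj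
          (R.jStar.mapTriangle.obj (Triangle.mk f g h)))).rotate.mor₁ ≫ R.jStar.map v =
        𝟙 _ ≫ (R.jStar.mapTriangle.obj (Triangle.mk
          ((R.jLower.mapTriangle.obj (R.jStar.mapTriangle.obj (Triangle.mk f g h))).mor₂ ≫ v)
          eZ dZ)).mor₁ := by
      dsimp [Triangle.rotate]
      rw [Category.id_comp]; exact (R.jStar.map_comp _ _).symm
    obtain ⟨ρ, hρ₁, hρ₂⟩ := complete_distinguished_triangle_morphism _ _ hdistT₁ hdistT₂j
      (𝟙 _) (R.jStar.map v) comm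
    have hρiso : IsIso ρ := by
      haveI := hIsoV
      exact isIso₃_of_isIso₁₂ (Triangle.homMk
        ((R.jStar.mapTriangle.obj (R.jLower.mapTriangle.obj
          (R.jStar.mapTriangle.obj (Triangle.mk f g h)))).rotate)
        (R.jStar.mapTriangle.obj (Triangle.mk
          ((R.jLower.mapTriangle.obj (R.jStar.mapTriangle.obj (Triangle.mk f g h))).mor₂ ≫ v)
          eZ dZ)) (𝟙 _) (R.jStar.map v) ρ comm hρ₁ hρ₂)
        hdistT₁ hdistT₂j (IsIso.id _) hIsoV
    -- facts about `i^*`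
    have hzE : IsZero (R.iStar.obj (R.jLower.obj (R.jStar.obj E))) :=
      HRSAux.isZero_iStar_jLower R _
    have hzB : IsZero (R.iStar.obj (R.jLower.obj (R.jStar.obj B))) :=
      HRSAux.isZero_iStar_jLower R _
    have hdistTCy : R.iStar.mapTriangle.obj (Triangle.mk
        ((R.jLower.mapTriangle.obj (R.jStar.mapTriangle.obj (Triangle.mk f g h))).mor₂ ≫ v)
        eZ dZ) ∈ distTriang Y := R.iStar.map_distinguished _ hdistC
    have hIso₂ : IsIso ((R.iStar.mapTriangle.obj (Triangle.mk
        ((R.jLower.mapTriangle.obj (R.jStar.mapTriangle.obj (Triangle.mk f g h))).mor₂ ≫ v)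
        eZ dZ)).mor₂) := (Triangle.isZero₁_iff_isIso₂ _ hdistTCy).1 hzE
    have hdistTWy : R.iStar.mapTriangle.obj (Triangle.mk w v ε) ∈ distTriang Y :=
      R.iStar.map_distinguished _ hdistW
    have hIso₃ : IsIso ((R.iStar.mapTriangle.obj (Triangle.mk w v ε)).mor₃) :=
      (Triangle.isZero₂_iff_isIso₃ _ hdistTWy).1 hzB
    refine ⟨Z⟦(-1 : ℤ)⟧, B', _, _, _, ⟨?_, ?_⟩, htf.mem_heart_t B' hB'T, hB'T,
      inv_rot_of_distTriang _ hdistC⟩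
    · -- XLe component
      have s0 : XLe ((R.jStar.obj A)⟦(-1 : ℤ)⟧) :=
        hX.isoClosed_le ((R.jStar.commShiftIso (-1 : ℤ)).app A) hA.1
      have s1 : XLe ((R.jStar.obj (R.jLower.obj (R.jStar.obj A)))⟦(-1 : ℤ)⟧) :=
        hX.isoClosed_le ((shiftFunctor X (-1 : ℤ)).mapIso
          (asIso (R.adj_j₁.unit.app (R.jStar.obj A)))) s0
      have s2 : XLe ((((R.jStar.obj (R.jLower.obj
          (R.jStar.obj A)))⟦(1 : ℤ)⟧)⟦(-1 : ℤ)⟧)⟦(-1 : ℤ)⟧) :=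
        hX.isoClosed_le ((shiftFunctor X (-1 : ℤ)).mapIso
          ((shiftFunctorCompIsoId X (1 : ℤ) (-1 : ℤ) (by omega)).app _).symm) s1
      have s3 : XLe (((R.jStar.obj Z)⟦(-1 : ℤ)⟧)⟦(-1 : ℤ)⟧) :=
        hX.isoClosed_le ((shiftFunctor X (-1 : ℤ)).mapIso
          ((shiftFunctor X (-1 : ℤ)).mapIso (@asIso _ _ _ _ ρ hρiso))) s2
      have s4 : XLe ((R.jStar.obj (Z⟦(-1 : ℤ)⟧))⟦(-1 : ℤ)⟧) :=
        hX.isoClosed_le ((shiftFunctor X (-1 : ℤ)).mapIso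
          ((R.jStar.commShiftIso (-1 : ℤ)).app Z).symm) s3
      exact hX.isoClosed_le ((R.jStar.commShiftIso (-1 : ℤ)).app (Z⟦(-1 : ℤ)⟧)).symm s4
    · -- YLe component
      have y0 : YLe ((R.iStar.obj W)⟦(-1 : ℤ)⟧) :=
        hY.isoClosed_le ((R.iStar.commShiftIso (-1 : ℤ)).app W) hW.2
      have y1 : YLe ((((R.iStar.obj W)⟦(1 : ℤ)⟧)⟦(-1 : ℤ)⟧)⟦(-1 : ℤ)⟧) :=
        hY.isoClosed_le ((shiftFunctor Y (-1 : ℤ)).mapIso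
          ((shiftFunctorCompIsoId Y (1 : ℤ) (-1 : ℤ) (by omega)).app
            (R.iStar.obj W)).symm) y0
      have y2 : YLe (((R.iStar.obj B')⟦(-1 : ℤ)⟧)⟦(-1 : ℤ)⟧) :=
        hY.isoClosed_le ((shiftFunctor Y (-1 : ℤ)).mapIso ((shiftFunctor Y (-1 : ℤ)).mapIso
          (asIso ((R.iStar.mapTriangle.obj (Triangle.mk w v ε)).mor₃)).symm)) y1
      have y3 : YLe (((R.iStar.obj Z)⟦(-1 : ℤ)⟧)⟦(-1 : ℤ)⟧) :=
        hY.isoClosed_le ((shiftFunctor Y (-1 : ℤ)).mapIso ((shiftFunctor Y (-1 : ℤ)).mapIso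
          (@asIso _ _ _ _ ((R.iStar.mapTriangle.obj (Triangle.mk
            ((R.jLower.mapTriangle.obj (R.jStar.mapTriangle.obj
              (Triangle.mk f g h))).mor₂ ≫ v) eZ dZ)).mor₂) hIso₂))) y2
      have y4 : YLe ((R.iStar.obj (Z⟦(-1 : ℤ)⟧))⟦(-1 : ℤ)⟧) :=
        hY.isoClosed_le ((shiftFunctor Y (-1 : ℤ)).mapIso
          ((R.iStar.commShiftIso (-1 : ℤ)).app Z).symm) y3
      exact hY.isoClosed_le ((R.iStar.commShiftIso (-1 : ℤ)).app (Z⟦(-1 : ℤ)⟧)).symm y4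
end HRSAux
end
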